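/- arXiv:1505.01530 — 3 statements merged into one kernel-verified Lean document; each statement's English description precedes it below -/
import Mathlib

section
/- For all real b > 0 and c > 0, the series Σ_{n≥1} χ(n) · n / ( (n²+b²)² + c² ) equals (π/(4c)) · sinh((π/2)A(b,c)) · sin((π/2)B(b,c)) / ( sinh²((π/2)A(b,c)) + cos²((π/2)B(b,c)) ). -/
open Real

/-- Dedekind eta function on the imaginary axis: `dedekindEtaI x = η(i x)`
for real `x > 0`, with `q = e^{-2πx}`. -/
noncomputable def dedekindEtaI (x : ℝ) : ℝ :=
  Real.exp (-(π * x) / 12) * ∏' n : ℕ, (1 - Real.exp (-(2 * π * x) * (n + 1)))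

noncomputable def A (b c : ℝ) : ℝ := Real.sqrt ((Real.sqrt (b ^ 4 + c ^ 2) + b ^ 2) / 2)

noncomputable def B (b c : ℝ) : ℝ := Real.sqrt ((Real.sqrt (b ^ 4 + c ^ 2) - b ^ 2) / 2)

/-- The character χ with χ(n)=0 for even n, 1 for n ≡ 1 (mod 4), −1 for n ≡ 3 (mod 4). -/
noncomputable def chi (n : ℕ) : ℝ :=
  if n % 2 = 0 then 0 else if n % 4 = 1 then 1 else -1


noncomputable def gg (w : ℂ) (x : ℝ) : ℂ := Complex.cosh (w * ((π:ℂ)/2 - (x:ℂ)))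

noncomputable def hh (w₁ w₂ : ℂ) (x : ℝ) : ℂ :=
  gg w₁ x / Complex.cosh (w₁ * ((π:ℂ)/2)) - gg w₂ x / Complex.cosh (w₂ * ((π:ℂ)/2))

noncomputable def FF (w₁ w₂ : ℂ) (x : ℝ) : ℂ :=
  if x ≤ π then hh w₁ w₂ x else -hh w₁ w₂ (x - π)

lemma hasDerivAt_aux (w μ : ℂ) (hw : w^2 - μ^2 ≠ 0) (x : ℝ) :
    HasDerivAt (fun y : ℝ => (Complex.exp (μ*(y:ℂ)) *
        (-μ * Complex.cosh (w*((π:ℂ)/2 - (y:ℂ))) - w * Complex.sinh (w*((π:ℂ)/2 - (y:ℂ))))) / (w^2 - μ^2))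
      (Complex.exp (μ*(x:ℂ)) * Complex.cosh (w*((π:ℂ)/2 - (x:ℂ)))) x := by
  have main : ∀ z : ℂ, HasDerivAt (fun z : ℂ => (Complex.exp (μ*z) *
        (-μ * Complex.cosh (w*((π:ℂ)/2 - z)) - w * Complex.sinh (w*((π:ℂ)/2 - z)))) / (w^2 - μ^2))
      (Complex.exp (μ*z) * Complex.cosh (w*((π:ℂ)/2 - z))) z := by
    intro z
    have h0 : HasDerivAt (fun z : ℂ => w*((π:ℂ)/2 - z)) (-w) z := by
      simpa using (((hasDerivAt_id z).const_sub ((π:ℂ)/2)).const_mul w)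
    have h1 : HasDerivAt (fun z : ℂ => Complex.exp (μ*z)) (μ * Complex.exp (μ*z)) z := by
      simpa [mul_comm] using ((hasDerivAt_id z).const_mul μ).cexp
    have h2 := (Complex.hasDerivAt_cosh (w*((π:ℂ)/2 - z))).comp z h0
    have h3 := (Complex.hasDerivAt_sinh (w*((π:ℂ)/2 - z))).comp z h0
    have h4 := (h1.mul ((h2.const_mul (-μ)).sub (h3.const_mul w))).div_const (w^2 - μ^2)
    refine h4.congr_deriv ?_
    simp only [Pi.sub_apply, Function.comp_apply]
    field_simp
    ring
  exact (main x).comp_ofReal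

lemma continuous_gg (w : ℂ) : Continuous (gg w) := by
  unfold gg
  exact Complex.continuous_cosh.comp (continuous_const.mul (continuous_const.sub Complex.continuous_ofReal))

lemma integral_exp_mul_cosh (w μ : ℂ) (hw : w^2 - μ^2 ≠ 0) (s t : ℝ) :
    (∫ x : ℝ in s..t, Complex.exp (μ*(x:ℂ)) * gg w x) =
      (Complex.exp (μ*(t:ℂ)) * (-μ * Complex.cosh (w*((π:ℂ)/2 - (t:ℂ))) - w * Complex.sinh (w*((π:ℂ)/2 - (t:ℂ))))) / (w^2 - μ^2)
      - (Complex.exp (μ*(s:ℂ)) * (-μ * Complex.cosh (w*((π:ℂ)/2 - (s:ℂ))) - w * Complex.sinh (w*((π:ℂ)/2 - (s:ℂ))))) / (w^2 - μ^2) := by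
  refine intervalIntegral.integral_eq_sub_of_hasDerivAt (fun x _ => hasDerivAt_aux w μ hw x) ?_
  apply Continuous.intervalIntegrable
  exact (Complex.continuous_exp.comp (continuous_const.mul Complex.continuous_ofReal)).mul (continuous_gg w)

lemma J_eq (w μ : ℂ) (hw : w^2 - μ^2 ≠ 0) :
    (∫ x : ℝ in (0:ℝ)..π, Complex.exp (μ*(x:ℂ)) * gg w x) =
      (Complex.exp (μ*((π:ℝ):ℂ)) * (-μ * Complex.cosh (w*((π:ℂ)/2)) + w * Complex.sinh (w*((π:ℂ)/2)))
       + μ * Complex.cosh (w*((π:ℂ)/2)) + w * Complex.sinh (w*((π:ℂ)/2))) / (w^2 - μ^2) := by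
  rw [integral_exp_mul_cosh w μ hw 0 π]
  have e1 : w * ((π:ℂ)/2 - ((π:ℝ):ℂ)) = -(w*((π:ℂ)/2)) := by push_cast; ring
  have e2 : w * ((π:ℂ)/2 - ((0:ℝ):ℂ)) = w*((π:ℂ)/2) := by push_cast; ring
  rw [e1, e2, Complex.cosh_neg, Complex.sinh_neg]
  have e3 : μ * ((0:ℝ):ℂ) = 0 := by push_cast; ring
  rw [e3, Complex.exp_zero]
  field_simp
  ring

lemma gg_zero (w : ℂ) : gg w 0 = Complex.cosh (w * ((π:ℂ)/2)) := by
  simp [gg]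

lemma gg_pi (w : ℂ) : gg w π = Complex.cosh (w * ((π:ℂ)/2)) := by
  have : w * ((π:ℂ)/2 - (π:ℂ)) = -(w * ((π:ℂ)/2)) := by ring
  rw [gg, this, Complex.cosh_neg]

lemma gg_pi_div_two (w : ℂ) : gg w (π/2) = 1 := by
  have : w * ((π:ℂ)/2 - ((π/2 : ℝ):ℂ)) = 0 := by push_cast; ring
  rw [gg, this, Complex.cosh_zero]

variable {w₁ w₂ : ℂ}

lemma continuous_hh : Continuous (hh w₁ w₂) :=
  ((continuous_gg w₁).div_const _).sub ((continuous_gg w₂).div_const _)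

lemma hh_zero (hC₁ : Complex.cosh (w₁ * ((π:ℂ)/2)) ≠ 0) (hC₂ : Complex.cosh (w₂ * ((π:ℂ)/2)) ≠ 0) :
    hh w₁ w₂ 0 = 0 := by
  rw [hh, gg_zero, gg_zero, div_self hC₁, div_self hC₂, sub_self]

lemma hh_pi (hC₁ : Complex.cosh (w₁ * ((π:ℂ)/2)) ≠ 0) (hC₂ : Complex.cosh (w₂ * ((π:ℂ)/2)) ≠ 0) :
    hh w₁ w₂ π = 0 := by
  rw [hh, gg_pi, gg_pi, div_self hC₁, div_self hC₂, sub_self]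

lemma continuous_FF (hC₁ : Complex.cosh (w₁ * ((π:ℂ)/2)) ≠ 0)
    (hC₂ : Complex.cosh (w₂ * ((π:ℂ)/2)) ≠ 0) : Continuous (FF w₁ w₂) := by
  unfold FF
  refine Continuous.if_le continuous_hh (continuous_hh.comp (continuous_id.sub continuous_const)).neg
    continuous_id continuous_const ?_
  intro x hx
  subst hx
  simp [hh_pi hC₁ hC₂, hh_zero hC₁ hC₂]

lemma fourierCoeffOn_FF
    (hC₁ : Complex.cosh (w₁ * ((π:ℂ)/2)) ≠ 0) (hC₂ : Complex.cosh (w₂ * ((π:ℂ)/2)) ≠ 0)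
    (n : ℤ) (h1 : ((n:ℂ)^2 + w₁^2) ≠ 0) (h2 : ((n:ℂ)^2 + w₂^2) ≠ 0)
    (hab : (0:ℝ) < 0 + 2*π) :
    fourierCoeffOn hab (FF w₁ w₂) n
      = (1 - (-1:ℂ)^n) * (-(n:ℂ)*Complex.I) / (π:ℂ) *
          (1/((n:ℂ)^2+w₁^2) - 1/((n:ℂ)^2+w₂^2)) := by
  classical
  set μ : ℂ := -(n:ℂ) * Complex.I with hμ
  have hμsq : μ^2 = -(n:ℂ)^2 := by
    rw [hμ, mul_pow, Complex.I_sq]; ring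
  have hw1 : w₁^2 - μ^2 ≠ 0 := by rw [hμsq, sub_neg_eq_add, add_comm]; exact h1
  have hw2 : w₂^2 - μ^2 ≠ 0 := by rw [hμsq, sub_neg_eq_add, add_comm]; exact h2
  have hm1 : ((-1:ℂ))^(-n) = (-1:ℂ)^n := by
    rw [zpow_neg]
    exact inv_eq_of_mul_eq_one_right (by rw [← mul_zpow]; norm_num)
  have hε : Complex.exp (μ * ((π:ℝ):ℂ)) = (-1:ℂ)^n := by
    have e : μ * ((π:ℝ):ℂ) = ((-n : ℤ) : ℂ) * ((π:ℝ) * Complex.I) := by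
      rw [hμ]; push_cast; ring
    rw [e, Complex.exp_int_mul, Complex.exp_pi_mul_I, hm1]
  have hcexp : Continuous (fun x : ℝ => Complex.exp (μ*(x:ℂ))) :=
    Complex.continuous_exp.comp (continuous_const.mul Complex.continuous_ofReal)
  rw [fourierCoeffOn_eq_integral]
  simp only [fourier_coe_apply, smul_eq_mul]
  have hint : ∀ x:ℝ, Complex.exp (2*(π:ℂ)*Complex.I*((-n : ℤ):ℂ)*(x:ℂ)/((0+2*π-0 : ℝ):ℂ))
      = Complex.exp (μ * (x:ℂ)) := by
    intro x
    congr 1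
    rw [hμ]
    have hπ : ((π:ℝ):ℂ) ≠ 0 := Complex.ofReal_ne_zero.mpr pi_ne_zero
    push_cast
    field_simp
    ring
  simp_rw [hint]
  have hBig : (∫ x in (0:ℝ)..(0+2*π), Complex.exp (μ*(x:ℂ)) * FF w₁ w₂ x)
      = (1 - (-1:ℂ)^n) * ∫ x in (0:ℝ)..π, Complex.exp (μ*(x:ℂ)) * hh w₁ w₂ x := by
    rw [zero_add]
    have hcFF : Continuous (fun x:ℝ => Complex.exp (μ*(x:ℂ)) * FF w₁ w₂ x) :=
      hcexp.mul (continuous_FF hC₁ hC₂)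
    rw [← intervalIntegral.integral_add_adjacent_intervals (a := (0:ℝ)) (b := π) (c := 2*π)
      (hcFF.intervalIntegrable 0 π) (hcFF.intervalIntegrable π (2*π))]
    have e₁ : (∫ x in (0:ℝ)..π, Complex.exp (μ*(x:ℂ)) * FF w₁ w₂ x)
        = ∫ x in (0:ℝ)..π, Complex.exp (μ*(x:ℂ)) * hh w₁ w₂ x := by
      apply intervalIntegral.integral_congr
      intro x hx
      rw [Set.uIcc_of_le pi_pos.le] at hx
      simp only [FF]
      rw [if_pos hx.2]
    have e₂ : (∫ x in π..(2*π), Complex.exp (μ*(x:ℂ)) * FF w₁ w₂ x)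
        = -((-1:ℂ)^n) * ∫ x in (0:ℝ)..π, Complex.exp (μ*(x:ℂ)) * hh w₁ w₂ x := by
      have step1 : (∫ x in π..(2*π), Complex.exp (μ*(x:ℂ)) * FF w₁ w₂ x)
          = ∫ x in π..(2*π), (fun y : ℝ => Complex.exp (μ*(((y+π):ℝ):ℂ)) * (-hh w₁ w₂ y)) (x - π) := by
        apply intervalIntegral.integral_congr
        intro x hx
        rw [Set.uIcc_of_le (by linarith [pi_pos] : π ≤ 2*π)] at hx
        simp only
        have hxπ : ((x - π + π : ℝ) : ℂ) = (x : ℂ) := by push_cast; ring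
        rw [hxπ]
        rcases eq_or_lt_of_le hx.1 with h | h
        · simp only [FF]
          rw [if_pos h.symm.le, ← h, hh_pi hC₁ hC₂, sub_self, hh_zero hC₁ hC₂]
          simp
        · simp only [FF]
          rw [if_neg (not_le.mpr h)]
      have step2 := intervalIntegral.integral_comp_sub_right (a := π) (b := 2*π)
        (fun y : ℝ => Complex.exp (μ*(((y+π):ℝ):ℂ)) * (-hh w₁ w₂ y)) π
      rw [step1, step2]
      have hb1 : π - π = (0:ℝ) := by ring
      have hb2 : 2*π - π = π := by ring
      rw [hb1, hb2]
      have key : ∀ y:ℝ, Complex.exp (μ*(((y+π):ℝ):ℂ)) * (-hh w₁ w₂ y)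
          = (-((-1:ℂ)^n)) * (Complex.exp (μ*(y:ℂ)) * hh w₁ w₂ y) := by
        intro y
        have e : ((y + π : ℝ) : ℂ) = (y:ℂ) + ((π:ℝ):ℂ) := by push_cast; ring
        rw [e, mul_add, Complex.exp_add, hε]
        ring
      simp_rw [key]
      rw [intervalIntegral.integral_const_mul]
    rw [e₁, e₂]
    ring
  rw [hBig]
  have hI1 : (∫ x in (0:ℝ)..π, Complex.exp (μ*(x:ℂ)) * hh w₁ w₂ x)
      = (Complex.cosh (w₁ * ((π:ℂ)/2)))⁻¹ * (∫ x in (0:ℝ)..π, Complex.exp (μ*(x:ℂ)) * gg w₁ x)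
        - (Complex.cosh (w₂ * ((π:ℂ)/2)))⁻¹ * (∫ x in (0:ℝ)..π, Complex.exp (μ*(x:ℂ)) * gg w₂ x) := by
    have key : ∀ x:ℝ, Complex.exp (μ*(x:ℂ)) * hh w₁ w₂ x
        = (Complex.cosh (w₁ * ((π:ℂ)/2)))⁻¹ * (Complex.exp (μ*(x:ℂ)) * gg w₁ x)
          - (Complex.cosh (w₂ * ((π:ℂ)/2)))⁻¹ * (Complex.exp (μ*(x:ℂ)) * gg w₂ x) := by
      intro x
      rw [hh]
      ring
    simp_rw [key]
    rw [intervalIntegral.integral_sub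
      (f := fun x => (Complex.cosh (w₁ * ((π:ℂ)/2)))⁻¹ * (Complex.exp (μ*(x:ℂ)) * gg w₁ x))
      (g := fun x => (Complex.cosh (w₂ * ((π:ℂ)/2)))⁻¹ * (Complex.exp (μ*(x:ℂ)) * gg w₂ x))
      (((hcexp.mul (continuous_gg w₁)).intervalIntegrable 0 π).const_mul _)
      (((hcexp.mul (continuous_gg w₂)).intervalIntegrable 0 π).const_mul _),
      intervalIntegral.integral_const_mul, intervalIntegral.integral_const_mul]
  rw [hI1, J_eq w₁ μ hw1, J_eq w₂ μ hw2, hε]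
  rw [Complex.real_smul]
  have hr1 : w₁^2 - μ^2 = (n:ℂ)^2 + w₁^2 := by rw [hμsq]; ring
  have hr2 : w₂^2 - μ^2 = (n:ℂ)^2 + w₂^2 := by rw [hμsq]; ring
  rw [hr1, hr2]
  have hπC : ((π:ℝ):ℂ) ≠ 0 := Complex.ofReal_ne_zero.mpr pi_ne_zero
  have hcast : ((1/(0+2*π-0) : ℝ) : ℂ) = 1/(2*(π:ℂ)) := by push_cast; ring
  rw [hcast]
  rcases Int.even_or_odd n with he | ho
  · rw [he.neg_one_zpow]
    ring
  · rw [ho.neg_one_zpow]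
    have k₁ : (Complex.cosh (w₁ * ((π:ℂ)/2)))⁻¹ *
        (((-1:ℂ) * (-μ * Complex.cosh (w₁*((π:ℂ)/2)) + w₁ * Complex.sinh (w₁*((π:ℂ)/2)))
          + μ * Complex.cosh (w₁*((π:ℂ)/2)) + w₁ * Complex.sinh (w₁*((π:ℂ)/2))) / ((n:ℂ)^2+w₁^2))
        = 2*μ/((n:ℂ)^2+w₁^2) := by
      rw [show ((-1:ℂ) * (-μ * Complex.cosh (w₁*((π:ℂ)/2)) + w₁ * Complex.sinh (w₁*((π:ℂ)/2)))
          + μ * Complex.cosh (w₁*((π:ℂ)/2)) + w₁ * Complex.sinh (w₁*((π:ℂ)/2)))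
          = 2*μ*Complex.cosh (w₁*((π:ℂ)/2)) from by ring]
      rw [show 2*μ*Complex.cosh (w₁*((π:ℂ)/2)) / ((n:ℂ)^2+w₁^2)
          = Complex.cosh (w₁*((π:ℂ)/2)) * (2*μ/((n:ℂ)^2+w₁^2)) from by ring,
        inv_mul_cancel_left₀ hC₁]
    have k₂ : (Complex.cosh (w₂ * ((π:ℂ)/2)))⁻¹ *
        (((-1:ℂ) * (-μ * Complex.cosh (w₂*((π:ℂ)/2)) + w₂ * Complex.sinh (w₂*((π:ℂ)/2)))
          + μ * Complex.cosh (w₂*((π:ℂ)/2)) + w₂ * Complex.sinh (w₂*((π:ℂ)/2))) / ((n:ℂ)^2+w₂^2))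
        = 2*μ/((n:ℂ)^2+w₂^2) := by
      rw [show ((-1:ℂ) * (-μ * Complex.cosh (w₂*((π:ℂ)/2)) + w₂ * Complex.sinh (w₂*((π:ℂ)/2)))
          + μ * Complex.cosh (w₂*((π:ℂ)/2)) + w₂ * Complex.sinh (w₂*((π:ℂ)/2)))
          = 2*μ*Complex.cosh (w₂*((π:ℂ)/2)) from by ring]
      rw [show 2*μ*Complex.cosh (w₂*((π:ℂ)/2)) / ((n:ℂ)^2+w₂^2)
          = Complex.cosh (w₂*((π:ℂ)/2)) * (2*μ/((n:ℂ)^2+w₂^2)) from by ring,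
        inv_mul_cancel_left₀ hC₂]
    rw [k₁, k₂]
    field_simp



lemma hIexp : Complex.exp ((π:ℂ)/2 * Complex.I) = Complex.I := by
  rw [Complex.exp_mul_I, show ((π:ℂ)/2) = ((π/2 : ℝ) : ℂ) by push_cast; ring,
    ← Complex.ofReal_cos, ← Complex.ofReal_sin, Real.cos_pi_div_two, Real.sin_pi_div_two]
  simp

lemma hmIexp : Complex.exp (-((π:ℂ)/2 * Complex.I)) = -Complex.I := by
  rw [Complex.exp_neg, hIexp, Complex.inv_I]

lemma key4 (m : ℕ) : ((1:ℂ) - (-1)^m) * (Complex.I^m - (-Complex.I)^m)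
    = 4 * Complex.I * ((chi m : ℝ) : ℂ) := by
  have hI4 : Complex.I^(4:ℕ) = 1 := by
    rw [show (4:ℕ) = 2*2 from rfl, pow_mul, Complex.I_sq]; norm_num
  have hmI4 : (-Complex.I)^(4:ℕ) = 1 := by rw [neg_pow]; norm_num [hI4]
  have hn4 : ((-1:ℂ))^(4:ℕ) = 1 := by norm_num
  have hmod2 : m % 2 = m % 4 % 2 := (Nat.mod_mod_of_dvd m (by norm_num)).symm
  conv_lhs => rw [← Nat.div_add_mod m 4]
  rw [pow_add, pow_add, pow_add, pow_mul, pow_mul, pow_mul, hI4, hmI4, hn4]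
  simp only [one_pow, one_mul]
  rcases (show m % 4 = 0 ∨ m % 4 = 1 ∨ m % 4 = 2 ∨ m % 4 = 3 by omega) with h|h|h|h <;>
    rw [h] at hmod2 ⊢ <;>
    simp [chi, hmod2, h, pow_succ, Complex.I_sq] <;> ring

set_option maxHeartbeats 1000000 in
theorem chi_series_sin (b c : ℝ) (hb : 0 < b) (hc : 0 < c) :
    ∑' n : ℕ, chi (n + 1) * ((n : ℝ) + 1) / ((((n : ℝ) + 1) ^ 2 + b ^ 2) ^ 2 + c ^ 2)
      = (π / (4 * c)) *
          ((Real.sinh (π / 2 * A b c) * Real.sin (π / 2 * B b c)) /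
            ((Real.sinh (π / 2 * A b c)) ^ 2 + (Real.cos (π / 2 * B b c)) ^ 2)) := by
  have hπ := Real.pi_pos
  have hπne := Real.pi_ne_zero
  -- basic facts about A and B
  have hs_sq : Real.sqrt (b^4 + c^2) ^ 2 = b^4 + c^2 := Real.sq_sqrt (by positivity)
  have hs_pos : 0 < Real.sqrt (b^4 + c^2) := Real.sqrt_pos.2 (by positivity)
  have hs_gt : b^2 < Real.sqrt (b^4 + c^2) := by nlinarith [hs_sq, hs_pos, hc, sq_nonneg c]
  have hA2 : A b c ^ 2 = (Real.sqrt (b^4 + c^2) + b^2)/2 := by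
    simp only [A]; rw [Real.sq_sqrt (by positivity)]
  have hB2 : B b c ^ 2 = (Real.sqrt (b^4 + c^2) - b^2)/2 := by
    simp only [B]; rw [Real.sq_sqrt (by linarith)]
  have hApos : 0 < A b c := by
    simp only [A]; apply Real.sqrt_pos.2; positivity
  have hBpos : 0 < B b c := by
    simp only [B]; apply Real.sqrt_pos.2; linarith
  have hABb : A b c ^ 2 - B b c ^ 2 = b^2 := by rw [hA2, hB2]; ring
  have hABc : 2 * (A b c) * (B b c) = c := by
    have h1 : (2 * (A b c) * (B b c))^2 = c^2 := by
      rw [mul_pow, mul_pow, hA2, hB2]; linear_combination hs_sq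
    have h2 : 0 ≤ 2 * (A b c) * (B b c) := by positivity
    calc 2 * (A b c) * (B b c) = Real.sqrt ((2 * (A b c) * (B b c))^2) := (Real.sqrt_sq h2).symm
      _ = Real.sqrt (c^2) := by rw [h1]
      _ = c := Real.sqrt_sq hc.le
  set w₁ : ℂ := ((A b c : ℝ) : ℂ) - ((B b c : ℝ) : ℂ) * Complex.I with hw₁def
  set w₂ : ℂ := ((A b c : ℝ) : ℂ) + ((B b c : ℝ) : ℂ) * Complex.I with hw₂def
  have cb : (((A b c : ℝ)):ℂ)^2 - (((B b c : ℝ)):ℂ)^2 = ((b:ℝ):ℂ)^2 := by exact_mod_cast hABb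
  have cc : 2*(((A b c : ℝ)):ℂ)*(((B b c : ℝ)):ℂ) = ((c:ℝ):ℂ) := by exact_mod_cast hABc
  have hw₁sq : w₁^2 = ((b:ℝ):ℂ)^2 - ((c:ℝ):ℂ) * Complex.I := by
    rw [hw₁def]
    linear_combination cb + (((B b c : ℝ)):ℂ)^2 * Complex.I_sq - Complex.I * cc
  have hw₂sq : w₂^2 = ((b:ℝ):ℂ)^2 + ((c:ℝ):ℂ) * Complex.I := by
    rw [hw₂def]
    linear_combination cb + (((B b c : ℝ)):ℂ)^2 * Complex.I_sq + Complex.I * cc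
  have hd₁ : ∀ n : ℤ, ((n:ℂ)^2 + w₁^2) ≠ 0 := by
    intro n h
    have h2 : ((((n:ℝ)^2 + b^2) : ℝ) : ℂ) - ((c:ℝ):ℂ)*Complex.I = 0 := by
      rw [← h, hw₁sq]; push_cast; ring
    have him := congrArg Complex.im h2
    simp only [Complex.sub_im, Complex.mul_im, Complex.ofReal_im, Complex.ofReal_re,
      Complex.I_im, Complex.I_re, Complex.zero_im] at him
    nlinarith [him, hc]
  have hd₂ : ∀ n : ℤ, ((n:ℂ)^2 + w₂^2) ≠ 0 := by
    intro n h
    have h2 : ((((n:ℝ)^2 + b^2) : ℝ) : ℂ) + ((c:ℝ):ℂ)*Complex.I = 0 := by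
      rw [← h, hw₂sq]; push_cast; ring
    have him := congrArg Complex.im h2
    simp only [Complex.add_im, Complex.mul_im, Complex.ofReal_im, Complex.ofReal_re,
      Complex.I_im, Complex.I_re, Complex.zero_im] at him
    nlinarith [him, hc]
  have hD : ∀ n : ℤ, ((n:ℂ)^2 + w₁^2)*((n:ℂ)^2 + w₂^2)
      = ((((n:ℝ)^2 + b^2)^2 + c^2 : ℝ) : ℂ) := by
    intro n
    rw [hw₁sq, hw₂sq]
    push_cast
    linear_combination (-((c:ℝ):ℂ)^2) * Complex.I_sq
  -- cosh values at the endpoints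
  have hargs₁ : w₁ * ((π:ℂ)/2) = (((π/2 * A b c : ℝ)):ℂ) - (((π/2 * B b c : ℝ)):ℂ) * Complex.I := by
    rw [hw₁def]; push_cast; ring
  have hargs₂ : w₂ * ((π:ℂ)/2) = (((π/2 * A b c : ℝ)):ℂ) + (((π/2 * B b c : ℝ)):ℂ) * Complex.I := by
    rw [hw₂def]; push_cast; ring
  have hC₁val : Complex.cosh (w₁ * ((π:ℂ)/2))
      = (((Real.cosh (π/2 * A b c) * Real.cos (π/2 * B b c) : ℝ)):ℂ)
        - (((Real.sinh (π/2 * A b c) * Real.sin (π/2 * B b c) : ℝ)):ℂ) * Complex.I := by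
    rw [hargs₁, Complex.cosh_sub, Complex.cosh_mul_I, Complex.sinh_mul_I,
      ← Complex.ofReal_cosh, ← Complex.ofReal_sinh, ← Complex.ofReal_cos, ← Complex.ofReal_sin]
    push_cast; ring
  have hC₂val : Complex.cosh (w₂ * ((π:ℂ)/2))
      = (((Real.cosh (π/2 * A b c) * Real.cos (π/2 * B b c) : ℝ)):ℂ)
        + (((Real.sinh (π/2 * A b c) * Real.sin (π/2 * B b c) : ℝ)):ℂ) * Complex.I := by
    rw [hargs₂, Complex.cosh_add, Complex.cosh_mul_I, Complex.sinh_mul_I,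
      ← Complex.ofReal_cosh, ← Complex.ofReal_sinh, ← Complex.ofReal_cos, ← Complex.ofReal_sin]
    push_cast; ring
  set a₀ : ℝ := Real.cosh (π/2 * A b c) * Real.cos (π/2 * B b c) with ha₀
  set b₀ : ℝ := Real.sinh (π/2 * A b c) * Real.sin (π/2 * B b c) with hb₀
  have hden : a₀^2 + b₀^2 = Real.sinh (π/2 * A b c)^2 + Real.cos (π/2 * B b c)^2 := by
    have h1 := Real.cosh_sq (π/2 * A b c)
    have h2 := Real.sin_sq_add_cos_sq (π/2 * B b c)
    rw [ha₀, hb₀]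
    linear_combination (Real.cos (π/2 * B b c))^2 * h1 + (Real.sinh (π/2 * A b c))^2 * h2
  have hsinhpos : 0 < Real.sinh (π/2 * A b c) := Real.sinh_pos_iff.2 (by positivity)
  have hdenpos : 0 < Real.sinh (π/2 * A b c)^2 + Real.cos (π/2 * B b c)^2 := by positivity
  have hprod : Complex.cosh (w₁ * ((π:ℂ)/2)) * Complex.cosh (w₂ * ((π:ℂ)/2))
      = ((a₀^2 + b₀^2 : ℝ) : ℂ) := by
    rw [hC₁val, hC₂val]
    push_cast
    linear_combination (-((b₀:ℝ):ℂ)^2) * Complex.I_sq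
  have hprodne : Complex.cosh (w₁ * ((π:ℂ)/2)) * Complex.cosh (w₂ * ((π:ℂ)/2)) ≠ 0 := by
    rw [hprod]
    rw [show (a₀^2 + b₀^2 : ℝ) = Real.sinh (π/2 * A b c)^2 + Real.cos (π/2 * B b c)^2 from hden]
    exact_mod_cast hdenpos.ne'
  have hC₁ : Complex.cosh (w₁ * ((π:ℂ)/2)) ≠ 0 := left_ne_zero_of_mul hprodne
  have hC₂ : Complex.cosh (w₂ * ((π:ℂ)/2)) ≠ 0 := right_ne_zero_of_mul hprodne
  haveI hT : Fact (0 < 2*π) := ⟨Real.two_pi_pos⟩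
  have hFFcont : Continuous (AddCircle.liftIco (2*π) 0 (FF w₁ w₂)) := by
    apply AddCircle.liftIco_zero_continuous
    · simp only [FF]
      rw [if_pos hπ.le, if_neg (by linarith : ¬ (2*π ≤ π)), hh_zero hC₁ hC₂,
        show 2*π - π = π from by ring, hh_pi hC₁ hC₂]
      simp
    · exact (continuous_FF hC₁ hC₂).continuousOn
  set f : C(AddCircle (2*π), ℂ) := ⟨AddCircle.liftIco (2*π) 0 (FF w₁ w₂), hFFcont⟩ with hfdef
  have hcoeff : ∀ n : ℤ, fourierCoeff (⇑f) n
      = (2*((c:ℝ):ℂ)/((π:ℝ):ℂ)) * (1 - (-1:ℂ)^n) * (n:ℂ)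
          / ((((n:ℝ)^2 + b^2)^2 + c^2 : ℝ) : ℂ) := by
    intro n
    have h0 : fourierCoeff (⇑f) n
        = fourierCoeffOn (lt_add_of_pos_right 0 hT.out) (FF w₁ w₂) n :=
      fourierCoeff_liftIco_eq (FF w₁ w₂) n
    rw [h0, fourierCoeffOn_FF hC₁ hC₂ n (hd₁ n) (hd₂ n)]
    have key : (1/((n:ℂ)^2 + w₁^2) - 1/((n:ℂ)^2 + w₂^2))
        = 2*((c:ℝ):ℂ)*Complex.I / ((((n:ℝ)^2 + b^2)^2 + c^2 : ℝ) : ℂ) := by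
      rw [div_sub_div _ _ (hd₁ n) (hd₂ n), hD n]
      congr 1
      rw [hw₁sq, hw₂sq]; push_cast; ring
    rw [key]
    linear_combination (-(1 - (-1:ℂ)^n) * 2*((c:ℝ):ℂ)*(n:ℂ)
      / (((π:ℝ):ℂ) * ((((n:ℝ)^2 + b^2)^2 + c^2 : ℝ) : ℂ))) * Complex.I_sq
  have hsummable : Summable (fun n : ℤ => fourierCoeff (⇑f) n) := by
    apply Summable.of_norm_bounded (g := fun n : ℤ => (4*c/π) * (2/((n:ℝ)^2 + 1)))
    · apply Summable.mul_left
      have hnat : Summable (fun m : ℕ => 2/((m:ℝ)^2 + 1)) := by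
        have hbase : Summable (fun m : ℕ => 1/((m:ℝ))^2) :=
          summable_one_div_nat_pow.2 (by norm_num)
        have hsh : Summable (fun m : ℕ => 4/(((m:ℝ)+1))^2) := by
          have h1 := (summable_nat_add_iff 1).2 hbase
          exact (h1.mul_left 4).congr (fun m => by push_cast; ring)
        apply Summable.of_nonneg_of_le (fun m => by positivity) (fun m => ?_) hsh
        rw [div_le_div_iff₀ (by positivity) (by positivity)]
        nlinarith [sq_nonneg ((m:ℝ) - 1)]
      apply Summable.of_nat_of_neg
      · exact hnat.congr (fun m => by push_cast; ring)
      · exact hnat.congr (fun m => by push_cast; ring)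
    · intro n
      rw [hcoeff n]
      have hDpos : (0:ℝ) < ((n:ℝ)^2 + b^2)^2 + c^2 := by positivity
      rcases Int.even_or_odd n with he | ho
      · rw [he.neg_one_zpow]
        simp only [sub_self, mul_zero, zero_mul, zero_div, norm_zero]
        positivity
      · rw [ho.neg_one_zpow]
        have hcast : (2*((c:ℝ):ℂ)/((π:ℝ):ℂ)) * (1 - (-1)) * (n:ℂ)
            / ((((n:ℝ)^2 + b^2)^2 + c^2 : ℝ) : ℂ)
            = (((4*c/π * n / (((n:ℝ)^2 + b^2)^2 + c^2)) : ℝ) : ℂ) := by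
          push_cast; ring
        rw [hcast, Complex.norm_real]
        have key : |(n:ℝ)| * ((n:ℝ)^2 + 1) ≤ 2*(((n:ℝ)^2 + b^2)^2 + c^2) := by
          rcases eq_or_ne n 0 with rfl | hn
          · simp; positivity
          · have h1 : (1:ℝ) ≤ |(n:ℝ)| := by
              rw [show |(n:ℝ)| = ((|n| : ℤ) : ℝ) from by push_cast; ring]
              exact_mod_cast Int.one_le_abs hn
            have e : (n:ℝ)^2 = |(n:ℝ)|^2 := (sq_abs _).symm
            rw [e]
            have t1 : |(n:ℝ)| ≤ |(n:ℝ)|^4 := by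
              calc |(n:ℝ)| = |(n:ℝ)|^1 := (pow_one _).symm
                _ ≤ |(n:ℝ)|^4 := pow_le_pow_right₀ h1 (by norm_num)
            have t2 : |(n:ℝ)|^3 ≤ |(n:ℝ)|^4 := pow_le_pow_right₀ h1 (by norm_num)
            have t3 : (|(n:ℝ)|^2)^2 ≤ (|(n:ℝ)|^2 + b^2)^2 := by
              apply pow_le_pow_left₀ (sq_nonneg _)
              linarith [sq_nonneg b]
            nlinarith [t1, t2, t3, sq_nonneg c]
        have habs : ‖(4*c/π * n / (((n:ℝ)^2 + b^2)^2 + c^2) : ℝ)‖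
            = 4*c/π * (|(n:ℝ)| / (((n:ℝ)^2 + b^2)^2 + c^2)) := by
          rw [Real.norm_eq_abs, abs_div, abs_mul, abs_of_pos (by positivity : (0:ℝ) < 4*c/π),
            abs_of_pos hDpos, mul_div_assoc]
        rw [habs]
        have h2 : |(n:ℝ)| / (((n:ℝ)^2 + b^2)^2 + c^2) ≤ 2/((n:ℝ)^2 + 1) := by
          rw [div_le_div_iff₀ hDpos (by positivity)]
          linarith [key]
        exact mul_le_mul_of_nonneg_left h2 (by positivity)
  have hpt := has_pointwise_sum_fourier_series_of_summable hsummable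
    (((π/2 : ℝ) : AddCircle (2*π)))
  have hval : f (((π/2 : ℝ) : AddCircle (2*π)))
      = 1/Complex.cosh (w₁ * ((π:ℂ)/2)) - 1/Complex.cosh (w₂ * ((π:ℂ)/2)) := by
    show AddCircle.liftIco (2*π) 0 (FF w₁ w₂) _ = _
    rw [AddCircle.liftIco_zero_coe_apply (by constructor <;> [positivity; linarith] :
      (π/2 : ℝ) ∈ Set.Ico 0 (2*π))]
    simp only [FF]
    rw [if_pos (by linarith : π/2 ≤ π), hh, gg_pi_div_two, gg_pi_div_two]
  have hfour : ∀ i : ℤ, (fourier i (((π/2 : ℝ) : AddCircle (2*π))) : ℂ)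
      = Complex.exp ((i:ℂ) * ((π:ℂ)/2) * Complex.I) := by
    intro i
    rw [fourier_coe_apply]
    congr 1
    have hπC : ((π:ℝ):ℂ) ≠ 0 := by exact_mod_cast hπne
    push_cast
    field_simp
  set Gf : ℤ → ℂ := fun i => (2*((c:ℝ):ℂ)/((π:ℝ):ℂ)) * (1 - (-1:ℂ)^i) * (i:ℂ)
      / ((((i:ℝ)^2 + b^2)^2 + c^2 : ℝ) : ℂ) * Complex.exp ((i:ℂ) * ((π:ℂ)/2) * Complex.I)
    with hGf
  have hfe : (fun i : ℤ => fourierCoeff (⇑f) i • (fourier i (((π/2 : ℝ) : AddCircle (2*π))) : ℂ))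
      = Gf := by
    funext i
    rw [smul_eq_mul, hcoeff i, hfour i, hGf]
  rw [hval, hfe] at hpt
  have hG0 : Gf 0 = 0 := by simp [hGf]
  have hpair := hpt.nat_add_neg
  rw [hG0, add_zero] at hpair
  have hkey : ∀ m : ℕ, Gf (m:ℤ) + Gf (-(m:ℤ))
      = (((8*c/π : ℝ)):ℂ) * Complex.I
          * ((chi m * m / (((m:ℝ)^2 + b^2)^2 + c^2) : ℝ) : ℂ) := by
    intro m
    have e3 : ((-1:ℂ))^((m:ℤ)) = (-1:ℂ)^m := zpow_natCast _ m
    have e4 : ((-1:ℂ))^(-(m:ℤ)) = (-1:ℂ)^m := by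
      rw [zpow_neg, e3]
      exact inv_eq_of_mul_eq_one_right (by rw [← mul_pow]; norm_num)
    have e1 : Complex.exp (((m:ℕ):ℂ) * ((π:ℂ)/2) * Complex.I) = Complex.I ^ m := by
      rw [show ((m:ℕ):ℂ) * ((π:ℂ)/2) * Complex.I
          = (m:ℕ) * (((π:ℂ)/2) * Complex.I) from by ring,
        Complex.exp_nat_mul, hIexp]
    have e2 : Complex.exp (-((m:ℕ):ℂ) * ((π:ℂ)/2) * Complex.I) = (-Complex.I) ^ m := by
      rw [show -((m:ℕ):ℂ) * ((π:ℂ)/2) * Complex.I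
          = (m:ℕ) * (-(((π:ℂ)/2) * Complex.I)) from by ring,
        Complex.exp_nat_mul, hmIexp]
    have hk := key4 m
    simp only [hGf]
    rw [e3, e4]
    push_cast
    rw [e1, e2]
    linear_combination ((2*((c:ℝ):ℂ)*((m:ℕ):ℂ) / ((π:ℝ):ℂ))
      * (1/((((m:ℕ):ℂ)^2 + ((b:ℝ):ℂ)^2)^2 + ((c:ℝ):ℂ)^2))) * hk
  have hR : (1:ℂ)/Complex.cosh (w₁ * ((π:ℂ)/2)) - 1/Complex.cosh (w₂ * ((π:ℂ)/2))
      = (((8*c/π : ℝ)):ℂ) * Complex.I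
          * (((π/(4*c) * (Real.sinh (π/2 * A b c) * Real.sin (π/2 * B b c)
              / (Real.sinh (π/2 * A b c)^2 + Real.cos (π/2 * B b c)^2)) : ℝ)):ℂ) := by
    rw [div_sub_div _ _ hC₁ hC₂, hprod, hC₁val, hC₂val, hden]
    rw [show (1*(((a₀:ℝ):ℂ)+((b₀:ℝ):ℂ)*Complex.I) - (((a₀:ℝ):ℂ)-((b₀:ℝ):ℂ)*Complex.I)*1)
        = ((2*b₀ : ℝ):ℂ) * Complex.I from by push_cast; ring]
    rw [show ((2*b₀:ℝ):ℂ) * Complex.I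
          / ((Real.sinh (π/2 * A b c)^2 + Real.cos (π/2 * B b c)^2 : ℝ):ℂ)
        = ((2*b₀/(Real.sinh (π/2 * A b c)^2 + Real.cos (π/2 * B b c)^2) : ℝ):ℂ) * Complex.I
        from by push_cast; ring]
    have h3 : (2*b₀/(Real.sinh (π/2 * A b c)^2 + Real.cos (π/2 * B b c)^2) : ℝ)
        = (8*c/π) * (π/(4*c) * (Real.sinh (π/2 * A b c) * Real.sin (π/2 * B b c)
            / (Real.sinh (π/2 * A b c)^2 + Real.cos (π/2 * B b c)^2))) := by
      rw [hb₀]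
      field_simp
      ring
    rw [h3, Complex.ofReal_mul]
    ring
  rw [hR] at hpair
  rw [show (fun m : ℕ => Gf (m:ℤ) + Gf (-(m:ℤ))) = fun m : ℕ => (((8*c/π : ℝ)):ℂ) * Complex.I
      * ((chi m * m / (((m:ℝ)^2 + b^2)^2 + c^2) : ℝ) : ℂ) from funext hkey] at hpair
  have hKne : (((8*c/π : ℝ)):ℂ) * Complex.I ≠ 0 :=
    mul_ne_zero (by exact_mod_cast (by positivity : (0:ℝ) < 8*c/π).ne') Complex.I_ne_zero
  have hCsum := (hasSum_mul_left_iff hKne).mp hpair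
  have hreal : HasSum (fun m : ℕ => chi m * m / (((m:ℝ)^2 + b^2)^2 + c^2))
      (π/(4*c) * (Real.sinh (π/2 * A b c) * Real.sin (π/2 * B b c)
        / (Real.sinh (π/2 * A b c)^2 + Real.cos (π/2 * B b c)^2))) := by
    exact Complex.hasSum_ofReal.mp hCsum
  have hshift := (hasSum_nat_add_iff
    (f := fun m : ℕ => chi m * m / (((m:ℝ)^2 + b^2)^2 + c^2)) 1).mpr
    (by simpa [chi] using hreal)
  calc ∑' n : ℕ, chi (n+1) * ((n:ℝ)+1) / ((((n:ℝ)+1)^2 + b^2)^2 + c^2)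
      = ∑' n : ℕ, chi (n+1) * ((n+1 : ℕ):ℝ) / ((((n+1:ℕ):ℝ)^2 + b^2)^2 + c^2) := by
        apply tsum_congr; intro m; push_cast; ring
    _ = π/(4*c) * (Real.sinh (π/2 * A b c) * Real.sin (π/2 * B b c)
        / (Real.sinh (π/2 * A b c)^2 + Real.cos (π/2 * B b c)^2)) := hshift.tsum_eq
end

section
/- For all real a > 0, b > 0, and c > 0, the integral ∫₀^∞ x · sin(ax) / ( (x²+b²)² + c² ) dx equals (π/(2c)) · e^{−a·A(b,c)} · sin(a·B(b,c)). -/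
open Real

open Real MeasureTheory Filter Set Complex

private lemma int_cexp (μ : ℂ) (hμ : 0 < μ.re) :
    IntegrableOn (fun t : ℝ => Complex.exp (-(μ * t))) (Set.Ioi 0) := by
  have h1 : IntegrableOn (fun t : ℝ => Real.exp (-(μ.re * t))) (Set.Ioi 0) := by
    simpa [neg_mul] using exp_neg_integrableOn_Ioi 0 hμ
  refine h1.integrable.mono' ?_ ?_
  · exact (Complex.continuous_exp.comp (by continuity)).aestronglyMeasurable
  · filter_upwards with t
    simp [Complex.norm_exp]

private lemma val_cexp (μ : ℂ) (hμ : 0 < μ.re) :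
    ∫ t in Set.Ioi (0:ℝ), Complex.exp (-(μ * t)) = 1 / μ := by
  have hμ0 : μ ≠ 0 := by intro h; simp [h] at hμ
  have hT : Tendsto (fun T : ℝ => ∫ t in (0:ℝ)..T, Complex.exp (-(μ * t)))
      atTop (nhds (∫ t in Set.Ioi (0:ℝ), Complex.exp (-(μ * t)))) :=
    intervalIntegral_tendsto_integral_Ioi 0 (int_cexp μ hμ) tendsto_id
  have hval : ∀ T : ℝ, ∫ t in (0:ℝ)..T, Complex.exp (-(μ * t))
      = (Complex.exp (-μ * T) - 1) / (-μ) := by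
    intro T
    have := integral_exp_mul_complex (a := 0) (b := T) (c := -μ) (by simpa using hμ0)
    simpa [neg_mul] using this
  have hlim : Tendsto (fun T : ℝ => (Complex.exp (-μ * T) - 1) / (-μ)) atTop
      (nhds ((0 - 1) / (-μ))) := by
    refine Tendsto.div_const ?_ _
    refine Tendsto.sub_const ?_ 1
    rw [tendsto_zero_iff_norm_tendsto_zero]
    have : ∀ T : ℝ, ‖Complex.exp (-μ * T)‖ = Real.exp (-μ.re * T) := by
      intro T; simp [Complex.norm_exp]
    simp only [this]
    have h2 : Tendsto (fun T : ℝ => -μ.re * T) atTop atBot :=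
      tendsto_id.const_mul_atTop_of_neg (by linarith)
    exact Real.tendsto_exp_atBot.comp h2
  simp_rw [hval] at hT
  have := tendsto_nhds_unique hT hlim
  rw [this]
  field_simp
  ring

noncomputable def auxF (z : ℂ) (t : ℝ) : ℂ :=
  ((Real.sign t : ℝ) : ℂ) *
    (Complex.exp (-(z * |t|)) - Complex.exp (-((starRingEnd ℂ) z * |t|)))

private lemma auxF_pos (z : ℂ) {t : ℝ} (ht : 0 < t) :
    auxF z t = Complex.exp (-(z * t)) - Complex.exp (-((starRingEnd ℂ) z * t)) := by
  simp [auxF, Real.sign_of_pos ht, abs_of_pos ht]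

private lemma auxF_neg (z : ℂ) {t : ℝ} (ht : t < 0) :
    auxF z t = -(Complex.exp (z * t) - Complex.exp ((starRingEnd ℂ) z * t)) := by
  simp only [auxF, Real.sign_of_neg ht, abs_of_neg ht]
  push_cast
  ring_nf

private lemma integrableOn_auxF_Ioi {z : ℂ} (hz : 0 < z.re) :
    IntegrableOn (auxF z) (Set.Ioi 0) := by
  have : IntegrableOn (fun t : ℝ =>
      Complex.exp (-(z * t)) - Complex.exp (-((starRingEnd ℂ) z * t))) (Set.Ioi 0) :=
    (int_cexp z hz).sub (int_cexp _ (by simpa using hz))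
  exact this.congr_fun (fun t ht => (auxF_pos z ht).symm) measurableSet_Ioi

private lemma integrable_auxF {z : ℂ} (hz : 0 < z.re) : Integrable (auxF z) := by
  have hIoi := integrableOn_auxF_Ioi hz
  have hneg : IntegrableOn (fun t => auxF z (-t)) (Set.Ici (0:ℝ)) := by
    have : IntegrableOn (fun t : ℝ =>
        -(Complex.exp (-(z * t)) - Complex.exp (-((starRingEnd ℂ) z * t)))) (Set.Ici 0) := by
      rw [integrableOn_Ici_iff_integrableOn_Ioi]
      exact ((int_cexp z hz).sub (int_cexp _ (by simpa using hz))).neg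
    refine this.congr_fun (fun t ht => ?_) measurableSet_Ici
    rcases eq_or_lt_of_le (Set.mem_Ici.mp ht : (0:ℝ) ≤ t) with h | h
    · simp [auxF, ← h]
    · rw [auxF_neg z (by linarith)]
      push_cast
      ring_nf
  have m : MeasurableEmbedding (fun x : ℝ => -x) :=
    (Homeomorph.neg ℝ).measurableEmbedding
  have hIic : IntegrableOn (auxF z) (Set.Iic 0) := by
    have h2 : IntegrableOn (auxF z) (Set.Iic 0)
        (Measure.map (fun x : ℝ => -x) volume) := by
      rw [m.integrableOn_map_iff]
      have hpre : (fun x : ℝ => -x) ⁻¹' (Set.Iic 0) = Set.Ici 0 := by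
        ext x; simp
      rw [hpre]
      exact hneg
    rwa [Measure.map_neg_eq_self] at h2
  have := hIic.union hIoi
  rwa [Set.Iic_union_Ioi, integrableOn_univ] at this

private lemma re_add_mul_I (z : ℂ) (w : ℝ) : (z + (w:ℂ) * Complex.I).re = z.re := by simp
private lemma re_sub_mul_I (z : ℂ) (w : ℝ) : (z - (w:ℂ) * Complex.I).re = z.re := by simp

private lemma fourier_auxF {z : ℂ} (hz : 0 < z.re) (ξ : ℝ) :
    FourierTransform.fourier (auxF z) ξ =
      1/(z + (2*π*ξ:ℝ) * Complex.I) - 1/((starRingEnd ℂ) z + (2*π*ξ:ℝ) * Complex.I)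
      - 1/(z - (2*π*ξ:ℝ) * Complex.I) + 1/((starRingEnd ℂ) z - (2*π*ξ:ℝ) * Complex.I) := by
  have hzc : 0 < ((starRingEnd ℂ) z).re := by simpa using hz
  rw [Real.fourier_real_eq_integral_exp_smul]
  have hint : Integrable (fun t : ℝ =>
      Complex.exp ((-2 * π * t * ξ : ℝ) * Complex.I) • auxF z t) := by
    refine (integrable_auxF hz).bdd_mul (c := 1) ?_ (Filter.Eventually.of_forall fun t => ?_)
    · exact (Complex.continuous_exp.comp (by continuity)).aestronglyMeasurable
    · simp [Complex.norm_exp]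
  rw [← integral_add_compl measurableSet_Iic hint, compl_Iic]
  have hIoi : ∫ t in Set.Ioi (0:ℝ), Complex.exp ((-2 * π * t * ξ : ℝ) * Complex.I) • auxF z t
      = 1/(z + (2*π*ξ:ℝ) * Complex.I) - 1/((starRingEnd ℂ) z + (2*π*ξ:ℝ) * Complex.I) := by
    rw [setIntegral_congr_fun measurableSet_Ioi (g := fun t : ℝ =>
        Complex.exp (-((z + (2*π*ξ:ℝ) * Complex.I) * t))
          - Complex.exp (-(((starRingEnd ℂ) z + (2*π*ξ:ℝ) * Complex.I) * t)))
      (fun t ht => ?_)]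
    · rw [integral_sub (int_cexp _ (by simpa using hz)) (int_cexp _ (by simpa using hzc)),
        val_cexp _ (by simpa using hz), val_cexp _ (by simpa using hzc)]
    · rw [auxF_pos z ht, smul_eq_mul, mul_sub, ← Complex.exp_add, ← Complex.exp_add]
      congr 2 <;> · push_cast; ring
  have hIic : ∫ t in Set.Iic (0:ℝ), Complex.exp ((-2 * π * t * ξ : ℝ) * Complex.I) • auxF z t
      = - (1/(z - (2*π*ξ:ℝ) * Complex.I)) + 1/((starRingEnd ℂ) z - (2*π*ξ:ℝ) * Complex.I) := by
    have := integral_comp_neg_Ioi (0:ℝ) (fun t : ℝ =>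
      Complex.exp ((-2 * π * t * ξ : ℝ) * Complex.I) • auxF z t)
    rw [neg_zero] at this
    rw [← this]
    rw [setIntegral_congr_fun measurableSet_Ioi (g := fun t : ℝ =>
        -Complex.exp (-((z - (2*π*ξ:ℝ) * Complex.I) * t))
          + Complex.exp (-(((starRingEnd ℂ) z - (2*π*ξ:ℝ) * Complex.I) * t)))
      (fun t ht => ?_)]
    · rw [integral_add ((int_cexp _ (by simpa using hz)).neg') (int_cexp _ (by simpa using hzc)),
        integral_neg, val_cexp _ (by simpa using hz), val_cexp _ (by simpa using hzc)]
    · rw [auxF_neg z (by simpa using ht), smul_eq_mul, mul_neg, mul_sub, ← Complex.exp_add,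
        ← Complex.exp_add]
      have h3 : ((-2 * π * -t * ξ : ℝ) : ℂ) * Complex.I + z * ((-t : ℝ) : ℂ)
          = -((z - (2*π*ξ:ℝ) * Complex.I) * t) := by push_cast; ring
      have h4 : ((-2 * π * -t * ξ : ℝ) : ℂ) * Complex.I + (starRingEnd ℂ) z * ((-t : ℝ) : ℂ)
          = -(((starRingEnd ℂ) z - (2*π*ξ:ℝ) * Complex.I) * t) := by push_cast; ring
      rw [h3, h4]
      ring
  rw [hIoi, hIic]
  ring

private lemma step1 (u : ℂ) (w : ℝ) (h1 : u + (w:ℂ)*Complex.I ≠ 0) (h2 : u - (w:ℂ)*Complex.I ≠ 0) :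
    1/(u + (w:ℂ)*Complex.I) - 1/(u - (w:ℂ)*Complex.I)
      = -2*(w:ℂ)*Complex.I/(u^2 + (w:ℂ)^2) := by
  have hmul : (u + (w:ℂ)*Complex.I) * (u - (w:ℂ)*Complex.I) = u^2 + (w:ℂ)^2 := by
    linear_combination (-(w:ℂ)^2) * Complex.I_sq
  rw [← hmul]
  field_simp
  ring

private lemma step2 (P Q w : ℝ) (hQ : Q ≠ 0) :
    -2*(w:ℂ)*Complex.I/((P:ℂ) + (Q:ℂ)*Complex.I) + 2*(w:ℂ)*Complex.I/((P:ℂ) - (Q:ℂ)*Complex.I)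
      = ((-4*Q*w/(P^2+Q^2) : ℝ) : ℂ) := by
  have hd1 : (P:ℂ) + (Q:ℂ)*Complex.I ≠ 0 := by
    intro h
    apply hQ
    simpa using congrArg Complex.im h
  have hd2 : (P:ℂ) - (Q:ℂ)*Complex.I ≠ 0 := by
    intro h
    apply hQ
    have := congrArg Complex.im h
    simpa using this
  have hd3 : (P^2 + Q^2 : ℝ) ≠ 0 := by positivity
  have hmul : ((P:ℂ) + (Q:ℂ)*Complex.I) * ((P:ℂ) - (Q:ℂ)*Complex.I) = ((P^2+Q^2 : ℝ) : ℂ) := by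
    push_cast
    linear_combination (-(Q:ℂ)^2) * Complex.I_sq
  rw [div_add_div _ _ hd1 hd2, hmul]
  have hnum : -2*(w:ℂ)*Complex.I*((P:ℂ) - (Q:ℂ)*Complex.I)
      + ((P:ℂ) + (Q:ℂ)*Complex.I) * (2*(w:ℂ)*Complex.I) = ((-4*Q*w : ℝ) : ℂ) := by
    push_cast
    linear_combination (4*(Q:ℂ)*(w:ℂ)) * Complex.I_sq
  rw [hnum, ← Complex.ofReal_div]

private lemma fourier_auxF_eq {A B : ℝ} (hA : 0 < A) (hB : 0 < B) (ξ : ℝ) :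
    FourierTransform.fourier (auxF ((A:ℂ) + (B:ℂ)*Complex.I)) ξ =
      ((-4*(2*A*B)*(2*π*ξ) / (((2*π*ξ)^2+(A^2-B^2))^2+(2*A*B)^2) : ℝ) : ℂ) := by
  set z := (A:ℂ) + (B:ℂ)*Complex.I with hzdef
  have hz : 0 < z.re := by simpa [hzdef] using hA
  set w : ℝ := 2*π*ξ with hwdef
  have hconj : (starRingEnd ℂ) z = (A:ℂ) - (B:ℂ)*Complex.I := by
    rw [hzdef, map_add, map_mul, Complex.conj_ofReal, Complex.conj_ofReal, Complex.conj_I]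
    ring
  have hz1 : z + (w:ℂ)*Complex.I ≠ 0 := by
    intro h
    have := congrArg Complex.re h
    simp [hzdef] at this
    exact hA.ne' this
  have hz2 : z - (w:ℂ)*Complex.I ≠ 0 := by
    intro h
    have := congrArg Complex.re h
    simp [hzdef] at this
    exact hA.ne' this
  have hc1 : (A:ℂ) - (B:ℂ)*Complex.I + (w:ℂ)*Complex.I ≠ 0 := by
    intro h
    have := congrArg Complex.re h
    simp at this
    exact hA.ne' this
  have hc2 : (A:ℂ) - (B:ℂ)*Complex.I - (w:ℂ)*Complex.I ≠ 0 := by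
    intro h
    have := congrArg Complex.re h
    simp at this
    exact hA.ne' this
  rw [fourier_auxF hz ξ, hconj]
  have e1 := step1 z w hz1 hz2
  have e2 := step1 ((A:ℂ) - (B:ℂ)*Complex.I) w hc1 hc2
  have hz2sq : z^2 + (w:ℂ)^2
      = ((w^2 + (A^2 - B^2) : ℝ) : ℂ) + ((2*A*B : ℝ) : ℂ)*Complex.I := by
    rw [hzdef]
    push_cast
    linear_combination (B:ℂ)^2 * Complex.I_sq
  have hc2sq : ((A:ℂ) - (B:ℂ)*Complex.I)^2 + (w:ℂ)^2
      = ((w^2 + (A^2 - B^2) : ℝ) : ℂ) - ((2*A*B : ℝ) : ℂ)*Complex.I := by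
    push_cast
    linear_combination (B:ℂ)^2 * Complex.I_sq
  rw [hz2sq] at e1
  rw [hc2sq] at e2
  have hstep2 := step2 (w^2+(A^2-B^2)) (2*A*B) w (by positivity)
  have hfin : ((-4*(2*A*B)*w / ((w^2+(A^2-B^2))^2+(2*A*B)^2) : ℝ) : ℂ)
      = ((-4*(2*A*B)*w / (((w^2+(A^2-B^2)))^2+(2*A*B)^2) : ℝ) : ℂ) := rfl
  linear_combination e1 - e2 + hstep2

private lemma auxG_bound {A B : ℝ} (hA : 0 < A) (hB : 0 < B) (hBA : B ^ 2 < A ^ 2) (ξ : ℝ) :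
    |(-4*(2*A*B)*(2*π*ξ) / (((2*π*ξ)^2+(A^2-B^2))^2+(2*A*B)^2) : ℝ)|
      ≤ (8*A*B / (min (A^2-B^2) 1)^2) * (1+ξ^2)⁻¹ := by
  set x : ℝ := 2*π*ξ with hx
  set p : ℝ := A^2 - B^2 with hp
  set m : ℝ := min p 1 with hm
  have hp0 : 0 < p := by simp [hp]; linarith
  have hm0 : 0 < m := lt_min hp0 one_pos
  have hmp : m ≤ p := min_le_left _ _
  have hm1 : m ≤ 1 := min_le_right _ _
  have hd0 : 0 < (x^2+p)^2+(2*A*B)^2 := by positivity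
  have h1 : 0 < 1 + ξ^2 := by positivity
  have hpi : (1:ℝ) ≤ π := by linarith [Real.pi_gt_three]
  have hpi2 : (1:ℝ) ≤ π^2 := by nlinarith
  have hxi : ξ^2 ≤ x^2 := by
    have h4 : x^2 = 4*π^2*ξ^2 := by rw [hx]; ring
    nlinarith [sq_nonneg ξ]
  have habs : |(-4*(2*A*B)*x : ℝ)| = 8*A*B*|x| := by
    rw [abs_mul, _root_.abs_of_nonpos (by nlinarith : (-4*(2*A*B):ℝ) ≤ 0)]
    ring
  have hxb : |x| ≤ 1 + x^2 := by
    nlinarith [abs_nonneg x, _root_.sq_abs x, sq_nonneg (|x|-1)]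
  have hkey : m * (1+x^2) ≤ x^2 + p := by nlinarith [sq_nonneg x]
  have hkey2 : (m*(1+x^2))^2 ≤ (x^2+p)^2 := by
    have h0 : 0 ≤ m*(1+x^2) := by positivity
    nlinarith
  rw [abs_div, _root_.abs_of_pos hd0, inv_eq_one_div, div_mul_div_comm,
    div_le_div_iff₀ hd0 (by positivity), habs]
  have hle : 1+ξ^2 ≤ 1+x^2 := by linarith
  have c1 : |x| * (1+ξ^2) ≤ (1+x^2)^2 := by
    calc |x| * (1+ξ^2) ≤ (1+x^2)*(1+x^2) :=
          mul_le_mul hxb hle (by positivity) (by positivity)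
      _ = (1+x^2)^2 := by ring
  have c2 : m^2*(|x| * (1+ξ^2)) ≤ (x^2+p)^2 := by
    calc m^2*(|x| * (1+ξ^2)) ≤ m^2*(1+x^2)^2 :=
          mul_le_mul_of_nonneg_left c1 (sq_nonneg m)
      _ = (m*(1+x^2))^2 := by ring
      _ ≤ (x^2+p)^2 := hkey2
  have c3 : m^2*(|x| * (1+ξ^2)) ≤ (x^2+p)^2+(2*A*B)^2 := by nlinarith [sq_nonneg (2*A*B)]
  calc 8*A*B*|x| * (m^2*(1+ξ^2)) = 8*A*B*(m^2*(|x| * (1+ξ^2))) := by ring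
    _ ≤ 8*A*B*((x^2+p)^2+(2*A*B)^2) := mul_le_mul_of_nonneg_left c3 (by positivity)
    _ = 8*A*B*1*((x^2+p)^2+(2*A*B)^2) := by ring

private lemma integrable_G {A B : ℝ} (hA : 0 < A) (hB : 0 < B) (hBA : B ^ 2 < A ^ 2) :
    Integrable (fun ξ : ℝ =>
      (-4*(2*A*B)*(2*π*ξ) / (((2*π*ξ)^2+(A^2-B^2))^2+(2*A*B)^2) : ℝ)) := by
  refine ((integrable_inv_one_add_sq.const_mul
      (8*A*B / (min (A^2-B^2) 1)^2)).mono' ?_ ?_)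
  · refine Continuous.aestronglyMeasurable (Continuous.div (by continuity) (by continuity) ?_)
    intro x
    have h1 : (0:ℝ) < (2*A*B)^2 := by positivity
    positivity
  · filter_upwards with ξ
    rw [Real.norm_eq_abs]
    exact auxG_bound hA hB hBA ξ

private lemma integrable_fourier_auxF {A B : ℝ} (hA : 0 < A) (hB : 0 < B)
    (hBA : B ^ 2 < A ^ 2) :
    Integrable (FourierTransform.fourier (auxF ((A:ℂ) + (B:ℂ)*Complex.I))) := by
  have heq : FourierTransform.fourier (auxF ((A:ℂ) + (B:ℂ)*Complex.I)) = fun ξ : ℝ =>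
      ((-4*(2*A*B)*(2*π*ξ) / (((2*π*ξ)^2+(A^2-B^2))^2+(2*A*B)^2) : ℝ) : ℂ) :=
    funext (fourier_auxF_eq hA hB)
  rw [heq]
  exact (integrable_G hA hB hBA).ofReal

private lemma key_complex {A B : ℝ} (hA : 0 < A) (hB : 0 < B) (hBA : B ^ 2 < A ^ 2)
    {a : ℝ} (ha : 0 < a) :
    (∫ x : ℝ, Complex.exp ((x*a : ℝ) * Complex.I) *
        ((-4*(2*A*B)*x / ((x^2+(A^2-B^2))^2+(2*A*B)^2) : ℝ) : ℂ))
      = (2*π : ℝ) • (Complex.exp (-(((A:ℂ)+(B:ℂ)*Complex.I) * a))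
          - Complex.exp (-(((A:ℂ)-(B:ℂ)*Complex.I) * a)))
    ∧ Integrable (fun x : ℝ => Complex.exp ((x*a : ℝ) * Complex.I) *
        ((-4*(2*A*B)*x / ((x^2+(A^2-B^2))^2+(2*A*B)^2) : ℝ) : ℂ)) := by
  set z := (A:ℂ) + (B:ℂ)*Complex.I with hzdef
  have hz : 0 < z.re := by simpa [hzdef] using hA
  set H : ℝ → ℂ := fun x => Complex.exp ((x*a : ℝ) * Complex.I) *
      ((-4*(2*A*B)*x / ((x^2+(A^2-B^2))^2+(2*A*B)^2) : ℝ) : ℂ) with hHdef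
  have hcont : ContinuousAt (auxF z) a := by
    have hev : (fun t : ℝ => Complex.exp (-(z * t))
        - Complex.exp (-((starRingEnd ℂ) z * t))) =ᶠ[nhds a] auxF z := by
      filter_upwards [Ioi_mem_nhds ha] with t ht using (auxF_pos z ht).symm
    exact ContinuousAt.congr (Continuous.continuousAt (by continuity)) hev
  have hinv := (integrable_auxF hz).fourierInv_fourier_eq (integrable_fourier_auxF hA hB hBA) hcont
  rw [Real.fourierInv_eq_fourier_neg,
    Real.fourier_real_eq_integral_exp_smul] at hinv
  have hptw : ∀ ξ : ℝ, Complex.exp ((-2 * π * ξ * -a : ℝ) * Complex.I) •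
      FourierTransform.fourier (auxF z) ξ = H (2*π*ξ) := by
    intro ξ
    rw [fourier_auxF_eq hA hB ξ, smul_eq_mul, hHdef]
    have harg : ((-2 * π * ξ * -a : ℝ) : ℂ) = ((2*π*ξ*a : ℝ) : ℂ) := by push_cast; ring
    simp only [harg]
  simp only [hptw] at hinv
  have hint2π : Integrable (fun ξ : ℝ => H (2*π*ξ)) := by
    have : Integrable (fun ξ : ℝ => Complex.exp ((-2 * π * ξ * -a : ℝ) * Complex.I) •
        FourierTransform.fourier (auxF z) ξ) := by
      refine (integrable_fourier_auxF hA hB hBA).bdd_mul (c := 1) ?_ (Filter.Eventually.of_forall fun t => ?_)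
      · exact (Complex.continuous_exp.comp (by continuity)).aestronglyMeasurable
      · simp [Complex.norm_exp]
    exact this.congr (Filter.Eventually.of_forall hptw)
  have h2pi : (2*π : ℝ) ≠ 0 := by positivity
  have hintH : Integrable H := (integrable_comp_mul_left_iff H h2pi).1 hint2π
  refine ⟨?_, hintH⟩
  rw [MeasureTheory.Measure.integral_comp_mul_left H (2*π)] at hinv
  have hABa : auxF z a = Complex.exp (-(z * a))
      - Complex.exp (-(((A:ℂ)-(B:ℂ)*Complex.I) * a)) := by
    rw [auxF_pos z ha]
    congr 2
    rw [hzdef, map_add, map_mul, Complex.conj_ofReal, Complex.conj_ofReal, Complex.conj_I]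
    ring
  rw [hABa] at hinv
  rw [_root_.abs_of_pos (by positivity : (0:ℝ) < (2*π)⁻¹)] at hinv
  have h3 := congrArg (fun u : ℂ => (2*π : ℝ) • u) hinv
  simp only [smul_smul, mul_inv_cancel₀ h2pi, one_smul] at h3
  exact h3

theorem gr_integral_sin (a b c : ℝ) (ha : 0 < a) (hb : 0 < b) (hc : 0 < c) :
    ∫ x in Set.Ioi (0 : ℝ), x * Real.sin (a * x) / ((x ^ 2 + b ^ 2) ^ 2 + c ^ 2)
      = (π / (2 * c)) * Real.exp (-(a * A b c)) * Real.sin (a * B b c) := by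
  set s : ℝ := Real.sqrt (b ^ 4 + c ^ 2) with hsdef
  have hs0 : 0 ≤ s := Real.sqrt_nonneg _
  have hs2 : s ^ 2 = b ^ 4 + c ^ 2 := Real.sq_sqrt (by positivity)
  have hsb : b ^ 2 < s := by
    rw [hsdef]
    rw [show b ^ 4 + c ^ 2 = (b^2)^2 + c^2 by ring]
    have h1 : (b^2)^2 < (b^2)^2 + c^2 := by nlinarith
    nlinarith [Real.sq_sqrt (show (0:ℝ) ≤ (b^2)^2 + c^2 by positivity),
      Real.sqrt_nonneg ((b^2)^2 + c^2), sq_nonneg (Real.sqrt ((b^2)^2 + c^2) - b^2)]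
  set AA : ℝ := A b c with hAdef
  set BB : ℝ := B b c with hBdef
  have hA2 : AA ^ 2 = (s + b ^ 2) / 2 := Real.sq_sqrt (by positivity)
  have hB2 : BB ^ 2 = (s - b ^ 2) / 2 := Real.sq_sqrt (by linarith)
  have hApos : 0 < AA := Real.sqrt_pos.2 (by positivity)
  have hBpos : 0 < BB := Real.sqrt_pos.2 (by linarith : (0:ℝ) < (s - b ^ 2)/2)
  have hdiff : AA ^ 2 - BB ^ 2 = b ^ 2 := by rw [hA2, hB2]; ring
  have hBA : BB ^ 2 < AA ^ 2 := by nlinarith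
  have hprod : 2 * AA * BB = c := by
    have hsq : (2 * AA * BB) ^ 2 = c ^ 2 := by
      have : (2 * AA * BB) ^ 2 = 4 * AA ^ 2 * BB ^ 2 := by ring
      rw [this, hA2, hB2]
      nlinarith [hs2]
    have h2 := congrArg Real.sqrt hsq
    rwa [Real.sqrt_sq (by positivity), Real.sqrt_sq hc.le] at h2
  obtain ⟨hkey, hint⟩ := key_complex hApos hBpos hBA ha
  simp only [hdiff, hprod] at hkey hint
  -- take imaginary parts
  have him := integral_im hint
  simp only [RCLike.im_eq_complex_im] at him
  rw [hkey] at him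
  -- compute the imaginary part of the RHS
  have hrhs : (((2*π : ℝ)) • (Complex.exp (-(((AA:ℂ)+(BB:ℂ)*Complex.I) * a))
      - Complex.exp (-(((AA:ℂ)-(BB:ℂ)*Complex.I) * a)))).im
      = 2*π * (-2 * Real.exp (-(AA*a)) * Real.sin (BB*a)) := by
    rw [Complex.real_smul, Complex.mul_im]
    simp only [Complex.sub_im, Complex.exp_im, Complex.ofReal_re, Complex.ofReal_im,
      Complex.neg_re, Complex.neg_im, Complex.mul_re, Complex.mul_im,
      Complex.add_re, Complex.add_im, Complex.sub_re, Complex.I_re, Complex.I_im,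
      Complex.exp_re]
    ring_nf
    rw [Real.sin_neg]
    ring
  rw [hrhs] at him
  -- compute imaginary part of integrand
  have hptim : ∀ x : ℝ, (Complex.exp ((x*a : ℝ) * Complex.I) *
      ((-4*c*x / ((x^2+b^2)^2+c^2) : ℝ) : ℂ)).im
      = (-4*c) * (x * Real.sin (a*x) / ((x^2+b^2)^2+c^2)) := by
    intro x
    rw [Complex.mul_im]
    simp only [Complex.ofReal_re, Complex.ofReal_im, mul_zero, zero_add,
      Complex.exp_ofReal_mul_I_im]
    rw [mul_comm x a]
    ring
  simp only [hptim] at him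
  rw [MeasureTheory.integral_const_mul] at him
  have heven : ∀ x : ℝ, |x| * Real.sin (a * |x|) / ((|x|^2+b^2)^2+c^2)
      = x * Real.sin (a*x) / ((x^2+b^2)^2+c^2) := by
    intro x
    rcases le_or_gt 0 x with h | h
    · rw [_root_.abs_of_nonneg h]
    · rw [_root_.abs_of_neg h, mul_neg, Real.sin_neg]
      rw [show ((-x)^2 : ℝ) = x^2 by ring]
      ring
  have habs := integral_comp_abs
    (f := fun x : ℝ => x * Real.sin (a*x) / ((x^2+b^2)^2+c^2))
  simp only [heven] at habs
  rw [habs] at him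
  have hEpos : Real.exp (-(AA*a)) = Real.exp (-(a*AA)) := by rw [mul_comm]
  have hSin : Real.sin (BB*a) = Real.sin (a*BB) := by rw [mul_comm]
  rw [hEpos, hSin] at him
  have hc0 : c ≠ 0 := hc.ne'
  set I0 : ℝ := ∫ x in Set.Ioi (0:ℝ), x * Real.sin (a*x) / ((x^2+b^2)^2+c^2) with hI0
  -- him : -4*c * (2 * I0) = 2π * (-2 * E * S)
  have hgoal : I0 = π / (2*c) * Real.exp (-(a*AA)) * Real.sin (a*BB) := by
    have h8 : (8*c : ℝ) ≠ 0 := by positivity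
    field_simp at him ⊢
    nlinarith [him]
  exact hgoal
end

section
/- For all real x > 0, η³(i·4x/π) = Σ_{n≥1} χ(n) · n · e^{−n²x}. -/
open Real

section Eta3AuxSection
open Filter Finset

namespace Eta3Aux

/-- triangular numbers: tri n = n(n-1)/2. -/
def tri : ℕ → ℕ
  | 0 => 0
  | n + 1 => tri n + n

lemma two_tri (n : ℕ) : 2 * tri n + n = n * n := by
  induction n with
  | zero => rfl
  | succ n ih => simp only [tri]; nlinarith [ih]

/-- Gaussian binomial coefficients via the Pascal recurrence. -/
noncomputable def gb (q : ℝ) : ℕ → ℕ → ℝ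
  | 0, 0 => 1
  | 0, _ + 1 => 0
  | _ + 1, 0 => 1
  | m + 1, j + 1 => gb q m (j + 1) + q ^ (m - j) * gb q m j

lemma gb_zero (q : ℝ) {m j : ℕ} (h : m < j) : gb q m j = 0 := by
  induction m generalizing j with
  | zero => obtain ⟨k, rfl⟩ : ∃ k, j = k + 1 := ⟨j - 1, by omega⟩; rfl
  | succ m ih =>
      obtain ⟨k, rfl⟩ : ∃ k, j = k + 1 := ⟨j - 1, by omega⟩
      rw [gb, ih (by omega), ih (by omega)]; ring

/-- Cauchy's q-binomial theorem. -/
lemma cauchy (q t : ℝ) (m : ℕ) :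
    ∏ i ∈ range m, (1 + t * q ^ i)
      = ∑ j ∈ range (m + 1), q ^ tri j * gb q m j * t ^ j := by
  induction m with
  | zero => simp [tri, gb]
  | succ m ih =>
      have h1 : ∀ j, q ^ tri (j+1) * gb q (m+1) (j+1) * t ^ (j+1)
          = q ^ tri (j+1) * gb q m (j+1) * t ^ (j+1)
            + (q ^ tri j * gb q m j * t ^ j) * (t * q ^ m) := by
        intro j
        rcases le_or_gt j m with hj | hj
        · have hq : q ^ (tri j + j) * q ^ (m - j) = q ^ tri j * q ^ m := by
            rw [← pow_add, ← pow_add, (by omega : tri j + j + (m - j) = tri j + m)]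
          rw [gb, show tri (j+1) = tri j + j from rfl]
          linear_combination (gb q m j * t ^ (j+1)) * hq
        · rw [gb, gb_zero q hj, gb_zero q (by omega : m < j + 1)]; ring
      have hz : (∑ j ∈ range (m + 2), q ^ tri j * gb q m j * t ^ j)
          = ∑ j ∈ range (m + 1), q ^ tri j * gb q m j * t ^ j := by
        rw [Finset.sum_range_succ, gb_zero q (by omega : m < m + 1)]; ring
      have hg0 : gb q m 0 = gb q (m+1) 0 := by cases m <;> rfl
      calc ∏ i ∈ range (m + 1), (1 + t * q ^ i)
          = (∑ j ∈ range (m + 1), q ^ tri j * gb q m j * t ^ j) * (1 + t * q ^ m) := by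
            rw [prod_range_succ, ih]
        _ = (∑ j ∈ range (m + 2), q ^ tri j * gb q m j * t ^ j)
            + ∑ j ∈ range (m + 1), (q ^ tri j * gb q m j * t ^ j) * (t * q ^ m) := by
            rw [hz, mul_add, mul_one, Finset.sum_mul]
        _ = (q ^ tri 0 * gb q m 0 * t ^ 0
              + ∑ j ∈ range (m + 1), q ^ tri (j+1) * gb q m (j+1) * t ^ (j+1))
            + ∑ j ∈ range (m + 1), (q ^ tri j * gb q m j * t ^ j) * (t * q ^ m) := by
            rw [Finset.sum_range_succ' (fun j => q ^ tri j * gb q m j * t ^ j)]; ring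
        _ = q ^ tri 0 * gb q m 0 * t ^ 0
            + ∑ j ∈ range (m + 1), (q ^ tri (j+1) * gb q m (j+1) * t ^ (j+1)
                + (q ^ tri j * gb q m j * t ^ j) * (t * q ^ m)) := by
            rw [add_assoc, Finset.sum_add_distrib]
        _ = ∑ j ∈ range (m + 1 + 1), q ^ tri j * gb q (m+1) j * t ^ j := by
            simp only [← h1]
            rw [Finset.sum_range_succ' (fun j => q ^ tri j * gb q (m+1) j * t ^ j), hg0]
            ring

section Dprod
variable {q : ℝ}

/-- partial products of the Euler function -/
noncomputable def D (q : ℝ) (N : ℕ) : ℝ := ∏ i ∈ range N, (1 - q ^ (i + 1))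

lemma one_sub_pow_pos (hq0 : 0 < q) (hq1 : q < 1) (i : ℕ) : 0 < 1 - q ^ (i + 1) := by
  have : q ^ (i + 1) < 1 := pow_lt_one₀ hq0.le hq1 (by omega)
  linarith

lemma D_pos (hq0 : 0 < q) (hq1 : q < 1) (N : ℕ) : 0 < D q N :=
  Finset.prod_pos fun i _ => one_sub_pow_pos hq0 hq1 i

lemma D_le_one (hq0 : 0 < q) (hq1 : q < 1) (N : ℕ) : D q N ≤ 1 :=
  Finset.prod_le_one (fun i _ => (one_sub_pow_pos hq0 hq1 i).le)
    (fun i _ => by nlinarith [pow_pos hq0 (i+1)])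

lemma D_succ (N : ℕ) : D q (N + 1) = D q N * (1 - q ^ (N + 1)) := Finset.prod_range_succ _ _

lemma D_anti (hq0 : 0 < q) (hq1 : q < 1) : Antitone (D q) := by
  apply antitone_nat_of_succ_le
  intro n
  rw [D_succ]
  nlinarith [D_pos hq0 hq1 n, pow_pos hq0 (n+1), one_sub_pow_pos hq0 hq1 n]

lemma gb_self (hq0 : 0 < q) (hq1 : q < 1) (m : ℕ) : gb q m m = 1 := by
  induction m with
  | zero => rfl
  | succ m ih => rw [gb, gb_zero q (by omega : m < m + 1), ih]; simp

/-- closed formula for Gaussian binomials. -/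
lemma gb_eq (hq0 : 0 < q) (hq1 : q < 1) :
    ∀ m j, j ≤ m → gb q m j * (D q j * D q (m - j)) = D q m := by
  intro m
  induction m with
  | zero => intro j hj; interval_cases j; simp [gb, D]
  | succ m ih =>
      intro j hj
      match j with
      | 0 => simp [gb, D]
      | j + 1 =>
        rcases eq_or_lt_of_le hj with h | h
        · obtain rfl : j = m := by omega
          rw [gb_self hq0 hq1]
          simp [D]
        · have hjm : j < m := by omega
          have h1 := ih (j + 1) (by omega)
          have h2 := ih j (by omega)
          have hd1 : D q (j + 1) = D q j * (1 - q ^ (j + 1)) := D_succ j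
          have hd2 : D q (m - j) = D q (m - (j + 1)) * (1 - q ^ (m - j)) := by
            rw [show m - j = (m - (j + 1)) + 1 by omega, D_succ,
              show m - (j + 1) + 1 = m - j by omega]
          have hdm : D q (m + 1) = D q m * (1 - q ^ (m + 1)) := D_succ m
          have hqq : q ^ (m - j) * q ^ (j + 1) = q ^ (m + 1) := by
            rw [← pow_add]; congr 1; omega
          rw [gb, show m + 1 - (j + 1) = m - j by omega, hdm, hd1, hd2]
          rw [hd1] at h1
          rw [hd2] at h2
          linear_combination (1 - q ^ (m - j)) * h1
            + (q ^ (m - j) * (1 - q ^ (j + 1))) * h2 - D q m * hqq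

lemma tri_sum (N : ℕ) : tri N = ∑ i ∈ range N, i := by
  induction N with
  | zero => rfl
  | succ N ih => rw [Finset.sum_range_succ, ← ih]; rfl

/-- exponent (j-N)(j-N+1)/2 as a natural number -/
def E (N j : ℕ) : ℕ := if N ≤ j then tri (j - N + 1) else tri (N - j)

lemma E_cast (N j : ℕ) : ((tri N : ℤ)) + tri j + (1 - N) * j = E N j := by
  have t : ∀ k : ℕ, 2 * (tri k : ℤ) + k = k * k := fun k => by exact_mod_cast two_tri k
  unfold E; split
  · next h =>
      have h3 : ((j - N + 1 : ℕ) : ℤ) = (j : ℤ) - N + 1 := by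
        push_cast [h]; ring
      have t3 := t (j - N + 1)
      rw [h3] at t3
      have h2 : 2 * ((tri N : ℤ) + tri j + (1 - (N : ℤ)) * j)
          = 2 * ((tri (j - N + 1) : ℕ) : ℤ) := by linear_combination t N + t j - t3
      linarith
  · next h =>
      have h' : j ≤ N := by omega
      have h3 : ((N - j : ℕ) : ℤ) = (N : ℤ) - j := by push_cast [h']; ring
      have t3 := t (N - j)
      rw [h3] at t3
      have h2 : 2 * ((tri N : ℤ) + tri j + (1 - (N : ℤ)) * j)
          = 2 * ((tri (N - j) : ℕ) : ℤ) := by linear_combination t N + t j - t3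
      linarith

/-- The finite triple-product identity. -/
lemma w_ident (hq0 : 0 < q) (N : ℕ) {w : ℝ} (hw : w ≠ 0) :
    (∏ i ∈ range N, (1 - w * q ^ (i + 1))) * (∏ i ∈ range N, (1 - w⁻¹ * q ^ i))
      = ∑ j ∈ range (2 * N + 1),
          (-1) ^ (N + j) * gb q (2 * N) j * q ^ E N j * w ^ ((j : ℤ) - N) := by
  have hqne : q ≠ 0 := hq0.ne'
  set t : ℝ := -(w * q ^ ((1 : ℤ) - N)) with ht
  -- step a
  have ha : (∏ i ∈ range N, (1 - w⁻¹ * q ^ i))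
      = ((-1) ^ N * (w ^ (-(N : ℤ))) * q ^ tri N)
        * ∏ i ∈ range N, (1 - w * q ^ (-(i : ℤ))) := by
    have : ∀ i ∈ range N, (1 - w⁻¹ * q ^ i)
        = ((-1) * w⁻¹ * q ^ i) * (1 - w * q ^ (-(i : ℤ))) := by
      intro i _
      rw [zpow_neg, zpow_natCast]
      field_simp
      ring
    rw [Finset.prod_congr rfl this, Finset.prod_mul_distrib, Finset.prod_mul_distrib,
      Finset.prod_const, Finset.card_range, Finset.prod_pow_eq_pow_sum, ← tri_sum,
      mul_pow, inv_pow, ← zpow_natCast w, ← zpow_neg]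
    try ring
  -- step b
  have hb : (∏ i ∈ range N, (1 - w * q ^ (i + 1)))
        * (∏ i ∈ range N, (1 - w * q ^ (-(i : ℤ))))
      = ∏ i ∈ range (2 * N), (1 + t * q ^ i) := by
    rw [two_mul, Finset.prod_range_add]
    have c1 : ∀ i ∈ range N, (1 + t * q ^ (N + i)) = 1 - w * q ^ (i + 1) := by
      intro i _
      have h5 : q ^ ((1 : ℤ) - N) * q ^ ((N : ℤ) + i) = q ^ ((i : ℤ) + 1) := by
        rw [← zpow_add₀ hqne]; congr 1; ring
      have e1 : (q : ℝ) ^ (N + i) = q ^ ((N : ℤ) + i) := by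
        rw [← zpow_natCast q (N + i)]; congr 1 <;> push_cast <;> ring
      have e2 : (q : ℝ) ^ (i + 1) = q ^ ((i : ℤ) + 1) := by
        rw [← zpow_natCast q (i + 1)]; congr 1 <;> push_cast <;> ring
      rw [ht, e1, e2]
      linear_combination (-w) * h5
    have c2 : (∏ i ∈ range N, (1 + t * q ^ i)) = ∏ i ∈ range N, (1 - w * q ^ (-(i : ℤ))) := by
      rw [← Finset.prod_range_reflect (fun i => 1 - w * q ^ (-(i : ℤ))) N]
      refine Finset.prod_congr rfl fun i hi => ?_
      rw [ht]
      have hiN : i < N := Finset.mem_range.mp hi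
      have e3 : ((N - 1 - i : ℕ) : ℤ) = (N : ℤ) - 1 - i := by
        have : ((N - 1 - i : ℕ) : ℤ) = (N : ℤ) - 1 - i ↔ True := by
          constructor <;> intro _ <;> [trivial; omega]
        omega
      have h5 : q ^ ((1 : ℤ) - N) * q ^ ((i : ℕ) : ℤ) = q ^ (-((N : ℤ) - 1 - i)) := by
        rw [← zpow_add₀ hqne]; congr 1; ring
      rw [e3, ← zpow_natCast q i]
      linear_combination (-w) * h5
    rw [Finset.prod_congr rfl c1, c2]
    ring
  calc (∏ i ∈ range N, (1 - w * q ^ (i + 1))) * (∏ i ∈ range N, (1 - w⁻¹ * q ^ i))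
      = ((-1) ^ N * (w ^ (-(N : ℤ))) * q ^ tri N) * ∏ i ∈ range (2 * N), (1 + t * q ^ i) := by
        rw [ha, ← hb]; ring
    _ = ∑ j ∈ range (2 * N + 1),
          ((-1) ^ N * (w ^ (-(N : ℤ))) * q ^ tri N) * (q ^ tri j * gb q (2 * N) j * t ^ j) := by
        rw [cauchy, Finset.mul_sum]
    _ = ∑ j ∈ range (2 * N + 1),
          (-1) ^ (N + j) * gb q (2 * N) j * q ^ E N j * w ^ ((j : ℤ) - N) := by
        refine Finset.sum_congr rfl fun j _ => ?_
        have htj : t ^ j = (-1) ^ j * w ^ (j : ℤ) * q ^ (((1 : ℤ) - N) * j) := by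
          rw [ht, neg_eq_neg_one_mul, mul_pow, mul_pow, ← zpow_natCast w,
            ← zpow_natCast (q ^ ((1 : ℤ) - N)), ← zpow_mul]
          try ring
        rw [htj]
        have hqpart : (q : ℝ) ^ tri N * q ^ tri j * q ^ (((1 : ℤ) - N) * j) = q ^ E N j := by
          rw [← zpow_natCast q (tri N), ← zpow_natCast q (tri j), ← zpow_natCast q (E N j),
            ← zpow_add₀ hqne, ← zpow_add₀ hqne, ← E_cast]
          all_goals push_cast
          all_goals ring
        have hwpart : w ^ (-(N : ℤ)) * w ^ (j : ℤ) = w ^ ((j : ℤ) - N) := by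
          rw [← zpow_add₀ hw]; ring_nf
        rw [pow_add]
        linear_combination ((-1:ℝ)^N * (-1)^j * gb q (2*N) j * (w ^ (-(N:ℤ)) * w ^ (j:ℤ))) * hqpart
          + ((-1:ℝ)^N * (-1)^j * gb q (2*N) j * (q:ℝ) ^ E N j) * hwpart


/-- derivative of `w_ident` at w = 1. -/
lemma deriv_ident (hq0 : 0 < q) (N : ℕ) (hN : 1 ≤ N) :
    D q N * D q (N - 1)
      = ∑ j ∈ range (2 * N + 1),
          (-1) ^ (N + j) * gb q (2 * N) j * q ^ E N j * (((j : ℤ) - N : ℤ) : ℝ) := by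
  set A : ℝ → ℝ := fun w => ∏ i ∈ range N, (1 - w * q ^ (i + 1)) with hA_def
  set C : ℝ → ℝ := fun w => ∏ i ∈ range (N - 1), (1 - w⁻¹ * q ^ (i + 1)) with hC_def
  set Bf : ℝ → ℝ := fun w => ∏ i ∈ range N, (1 - w⁻¹ * q ^ i) with hBf_def
  have hBC : ∀ w : ℝ, Bf w = C w * (1 - w⁻¹) := by
    intro w
    simp only [hBf_def, hC_def]
    rw [show N = (N - 1) + 1 by omega, Finset.prod_range_succ' (fun i => 1 - w⁻¹ * q ^ i)]
    simp
  obtain ⟨A', hA⟩ : ∃ a, HasDerivAt A a 1 :=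
    ⟨_, HasDerivAt.fun_finsetProd (fun i _ =>
      ((hasDerivAt_id (1:ℝ)).mul_const (q ^ (i + 1))).const_sub 1)⟩
  obtain ⟨C', hC⟩ : ∃ a, HasDerivAt C a 1 :=
    ⟨_, HasDerivAt.fun_finsetProd (fun i _ =>
      ((hasDerivAt_inv one_ne_zero).mul_const (q ^ (i + 1))).const_sub 1)⟩
  have h0 : HasDerivAt (fun w : ℝ => 1 - w⁻¹) 1 1 := by
    have := (hasDerivAt_inv (one_ne_zero : (1:ℝ) ≠ 0)).const_sub 1
    exact this.congr_deriv (by norm_num)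
  have hB : HasDerivAt Bf (C' * (1 - 1⁻¹) + C 1 * 1) 1 := by
    have := hC.mul h0
    exact this.congr_of_eventuallyEq (by filter_upwards with w; rw [hBC w]; rfl)
  have hBf1 : Bf 1 = 0 := by rw [hBC]; norm_num
  have hL : HasDerivAt (fun w => A w * Bf w) (A 1 * C 1) 1 := by
    have := hA.mul hB
    rw [hBf1] at this
    exact this.congr_deriv (by norm_num)
  have hR : HasDerivAt
      (fun w : ℝ => ∑ j ∈ range (2 * N + 1),
        (-1) ^ (N + j) * gb q (2 * N) j * q ^ E N j * w ^ ((j : ℤ) - N))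
      (∑ j ∈ range (2 * N + 1),
        (-1) ^ (N + j) * gb q (2 * N) j * q ^ E N j * (((j : ℤ) - N : ℤ) : ℝ)) 1 := by
    have h1 : ∀ j ∈ range (2 * N + 1), HasDerivAt
        (fun w : ℝ => (-1) ^ (N + j) * gb q (2 * N) j * q ^ E N j * w ^ ((j : ℤ) - N))
        ((-1) ^ (N + j) * gb q (2 * N) j * q ^ E N j * (((j : ℤ) - N : ℤ) : ℝ)) 1 := by
      intro j _
      have := (hasDerivAt_zpow ((j : ℤ) - N) 1 (Or.inl one_ne_zero)).const_mul
        ((-1 : ℝ) ^ (N + j) * gb q (2 * N) j * q ^ E N j)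
      refine this.congr_deriv ?_
      rw [one_zpow]
      push_cast
      ring
    exact HasDerivAt.fun_sum h1
  have hEv : (fun w => A w * Bf w) =ᶠ[nhds (1:ℝ)]
      (fun w : ℝ => ∑ j ∈ range (2 * N + 1),
        (-1) ^ (N + j) * gb q (2 * N) j * q ^ E N j * w ^ ((j : ℤ) - N)) := by
    filter_upwards [eventually_ne_nhds (one_ne_zero : (1:ℝ) ≠ 0)] with w hw
    exact w_ident hq0 N hw
  have hL' := hL.congr_of_eventuallyEq hEv.symm
  have huniq := hL'.unique hR
  rw [← huniq]
  congr 1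
  · simp [hA_def, D]
  · simp [hC_def, D]

section Pinf

/-- the Euler infinite product -/
noncomputable def Pinf (q : ℝ) : ℝ := ∏' n : ℕ, (1 - q ^ (n + 1))

lemma summable_log (hq0 : 0 < q) (hq1 : q < 1) :
    Summable (fun n : ℕ => Real.log (1 - q ^ (n + 1))) := by
  have key : ∀ n : ℕ, ‖Real.log (1 - q ^ (n + 1))‖ ≤ (1 - q)⁻¹ * q ^ (n + 1) := by
    intro n
    have ha : 0 < q ^ (n + 1) := pow_pos hq0 _
    have haq : q ^ (n + 1) ≤ q := by
      calc q ^ (n + 1) ≤ q ^ 1 := pow_le_pow_of_le_one hq0.le hq1.le (by omega)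
        _ = q := pow_one q
    have h1a : 0 < 1 - q ^ (n + 1) := by linarith
    have hlogle : Real.log (1 - q ^ (n + 1)) ≤ 0 :=
      Real.log_nonpos (by linarith) (by linarith)
    rw [Real.norm_eq_abs, abs_of_nonpos hlogle]
    have h2 : -Real.log (1 - q ^ (n + 1)) = Real.log (1 - q ^ (n + 1))⁻¹ :=
      (Real.log_inv _).symm
    rw [h2]
    calc Real.log (1 - q ^ (n + 1))⁻¹ ≤ (1 - q ^ (n + 1))⁻¹ - 1 :=
          Real.log_le_sub_one_of_pos (inv_pos.mpr h1a)
      _ = q ^ (n + 1) * (1 - q ^ (n + 1))⁻¹ := by field_simp; ring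
      _ ≤ q ^ (n + 1) * (1 - q)⁻¹ := by
          gcongr
      _ = (1 - q)⁻¹ * q ^ (n + 1) := mul_comm _ _
  have hs : Summable (fun n : ℕ => (1 - q)⁻¹ * q ^ (n + 1)) := by
    have : Summable (fun n : ℕ => q ^ (n + 1)) := by
      simpa [pow_succ, mul_comm] using (summable_geometric_of_lt_one hq0.le hq1).mul_right q
    exact this.mul_left _
  exact Summable.of_norm_bounded hs key

lemma hasProd_Pinf (hq0 : 0 < q) (hq1 : q < 1) :
    HasProd (fun n : ℕ => 1 - q ^ (n + 1))
      (Real.exp (∑' n : ℕ, Real.log (1 - q ^ (n + 1)))) := by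
  have h := ((summable_log hq0 hq1).hasSum).rexp
  have hfun : (Real.exp ∘ fun n : ℕ => Real.log (1 - q ^ (n + 1)))
      = fun n : ℕ => 1 - q ^ (n + 1) := by
    funext n
    have ha : 0 < q ^ (n + 1) := pow_pos hq0 _
    have haq : q ^ (n + 1) ≤ q := by
      calc q ^ (n + 1) ≤ q ^ 1 := pow_le_pow_of_le_one hq0.le hq1.le (by omega)
        _ = q := pow_one q
    exact Real.exp_log (by simp; linarith)
  rwa [hfun] at h

lemma Pinf_eq (hq0 : 0 < q) (hq1 : q < 1) :
    Pinf q = Real.exp (∑' n : ℕ, Real.log (1 - q ^ (n + 1))) :=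
  (hasProd_Pinf hq0 hq1).tprod_eq

lemma Pinf_pos (hq0 : 0 < q) (hq1 : q < 1) : 0 < Pinf q := by
  rw [Pinf_eq hq0 hq1]; exact Real.exp_pos _

lemma tendsto_D (hq0 : 0 < q) (hq1 : q < 1) :
    Filter.Tendsto (D q) Filter.atTop (nhds (Pinf q)) := by
  have := (hasProd_Pinf hq0 hq1).tendsto_prod_nat
  rw [← Pinf_eq hq0 hq1] at this
  exact this

lemma Pinf_le_D (hq0 : 0 < q) (hq1 : q < 1) (k : ℕ) : Pinf q ≤ D q k :=
  le_of_tendsto (tendsto_D hq0 hq1)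
    (Filter.eventually_atTop.2 ⟨k, fun n hn => D_anti hq0 hq1 hn⟩)

lemma gb_nonneg (hq0 : 0 ≤ q) : ∀ m j, 0 ≤ gb q m j := by
  intro m
  induction m with
  | zero => intro j; match j with
      | 0 => norm_num [gb]
      | j + 1 => norm_num [gb]
  | succ m ih => intro j; match j with
      | 0 => norm_num [gb]
      | j + 1 =>
          rw [gb]
          have := ih j
          have := ih (j + 1)
          positivity

lemma gb_le (hq0 : 0 < q) (hq1 : q < 1) {m j : ℕ} (hj : j ≤ m) :
    gb q m j ≤ (Pinf q * Pinf q)⁻¹ := by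
  have hP := Pinf_pos hq0 hq1
  have h := gb_eq hq0 hq1 m j hj
  have hden : 0 < D q j * D q (m - j) := mul_pos (D_pos hq0 hq1 _) (D_pos hq0 hq1 _)
  have hgb : gb q m j = D q m / (D q j * D q (m - j)) := by
    rw [eq_div_iff hden.ne']; exact h
  rw [hgb, inv_eq_one_div]
  refine div_le_div₀ (by norm_num) (D_le_one hq0 hq1 m) (mul_pos hP hP) ?_
  exact mul_le_mul (Pinf_le_D hq0 hq1 j) (Pinf_le_D hq0 hq1 (m - j)) hP.le
    (D_pos hq0 hq1 j).le

lemma tendsto_D_comp (hq0 : 0 < q) (hq1 : q < 1) {g : ℕ → ℕ}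
    (hg : Filter.Tendsto g Filter.atTop Filter.atTop) :
    Filter.Tendsto (fun N => D q (g N)) Filter.atTop (nhds (Pinf q)) :=
  (tendsto_D hq0 hq1).comp hg

lemma tendsto_two_mul : Filter.Tendsto (fun N : ℕ => 2 * N) Filter.atTop Filter.atTop := by
  exact Filter.tendsto_atTop_mono (g := fun N : ℕ => 2 * N)
    (f := fun N : ℕ => N) (fun n => by show n ≤ 2 * n; omega) Filter.tendsto_id

lemma tendsto_gb_add (hq0 : 0 < q) (hq1 : q < 1) (m : ℕ) :
    Filter.Tendsto (fun N => gb q (2 * N) (N + m)) Filter.atTop (nhds (Pinf q)⁻¹) := by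
  have hP := Pinf_pos hq0 hq1
  have hden : Pinf q * Pinf q ≠ 0 := by positivity
  have hlim : Filter.Tendsto (fun N => D q (2 * N) / (D q (N + m) * D q (N - m)))
      Filter.atTop (nhds (Pinf q / (Pinf q * Pinf q))) := by
    exact (tendsto_D_comp hq0 hq1 tendsto_two_mul).div
      (((tendsto_D_comp hq0 hq1 (Filter.tendsto_add_atTop_nat m)).mul
        (tendsto_D_comp hq0 hq1 (Filter.tendsto_sub_atTop_nat m)))) hden
  have heq : Pinf q / (Pinf q * Pinf q) = (Pinf q)⁻¹ := by field_simp
  rw [heq] at hlim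
  refine hlim.congr' ?_
  filter_upwards [Filter.eventually_atTop.2 ⟨m, fun N hN => hN⟩] with N hN
  have h := gb_eq hq0 hq1 (2 * N) (N + m) (by omega)
  rw [show 2 * N - (N + m) = N - m by omega] at h
  have hden2 : 0 < D q (N + m) * D q (N - m) :=
    mul_pos (D_pos hq0 hq1 _) (D_pos hq0 hq1 _)
  rw [eq_comm, eq_div_iff hden2.ne']
  exact h

lemma tendsto_gb_sub (hq0 : 0 < q) (hq1 : q < 1) (m : ℕ) :
    Filter.Tendsto (fun N => gb q (2 * N) (N - (m + 1))) Filter.atTop (nhds (Pinf q)⁻¹) := by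
  have hP := Pinf_pos hq0 hq1
  have hden : Pinf q * Pinf q ≠ 0 := by positivity
  have hlim : Filter.Tendsto (fun N => D q (2 * N) / (D q (N - (m + 1)) * D q (N + (m + 1))))
      Filter.atTop (nhds (Pinf q / (Pinf q * Pinf q))) := by
    exact (tendsto_D_comp hq0 hq1 tendsto_two_mul).div
      (((tendsto_D_comp hq0 hq1 (Filter.tendsto_sub_atTop_nat (m + 1))).mul
        (tendsto_D_comp hq0 hq1 (Filter.tendsto_add_atTop_nat (m + 1))))) hden
  have heq : Pinf q / (Pinf q * Pinf q) = (Pinf q)⁻¹ := by field_simp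
  rw [heq] at hlim
  refine hlim.congr' ?_
  filter_upwards [Filter.eventually_atTop.2 ⟨m + 1, fun N hN => hN⟩] with N hN
  have h := gb_eq hq0 hq1 (2 * N) (N - (m + 1)) (by omega)
  rw [show 2 * N - (N - (m + 1)) = N + (m + 1) by omega] at h
  have hden2 : 0 < D q (N - (m + 1)) * D q (N + (m + 1)) :=
    mul_pos (D_pos hq0 hq1 _) (D_pos hq0 hq1 _)
  rw [eq_comm, eq_div_iff hden2.ne']
  exact h

lemma reorg (hq0 : 0 < q) (hq1 : q < 1) (N : ℕ) (hN : 1 ≤ N) :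
    (∑ j ∈ range (2 * N + 1),
        (-1) ^ (N + j) * gb q (2 * N) j * q ^ E N j * (((j : ℤ) - N : ℤ) : ℝ))
      = (∑ m ∈ range N, (-1) ^ m * q ^ tri (m + 1) *
          (m * gb q (2 * N) (N + m) + (m + 1) * gb q (2 * N) (N - (m + 1))))
        + (-1) ^ N * N * q ^ tri (N + 1) := by
  rw [Finset.sum_range_succ]
  have hlast : (-1 : ℝ) ^ (N + 2 * N) * gb q (2 * N) (2 * N) * q ^ E N (2 * N)
      * ((((2 * N : ℕ) : ℤ) - N : ℤ) : ℝ) = (-1) ^ N * N * q ^ tri (N + 1) := by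
    rw [gb_self hq0 hq1, show N + 2 * N = N + 2 * N from rfl]
    have hE : E N (2 * N) = tri (N + 1) := by
      unfold E; rw [if_pos (by omega : N ≤ 2 * N)]; congr 1; omega
    have hsgn : (-1 : ℝ) ^ (N + 2 * N) = (-1) ^ N := by
      rw [pow_add, pow_mul]; norm_num
    rw [hE, hsgn]
    push_cast
    ring
  rw [hlast]
  congr 1
  set f : ℕ → ℝ := fun j => (-1 : ℝ) ^ (N + j) * gb q (2 * N) j * q ^ E N j
      * (((j : ℤ) - N : ℤ) : ℝ) with hf
  have hfval : ∀ j, f j = (-1 : ℝ) ^ (N + j) * gb q (2 * N) j * q ^ E N j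
      * (((j : ℤ) - N : ℤ) : ℝ) := fun j => rfl
  have hsplit : ∑ j ∈ range (2 * N), f j
      = (∑ j ∈ range N, f (N - 1 - j)) + ∑ j ∈ range N, f (N + j) := by
    rw [Finset.sum_range_reflect f N]
    rw [show 2 * N = N + N by ring, Finset.sum_range_add]
  rw [hsplit, ← Finset.sum_add_distrib]
  refine Finset.sum_congr rfl fun m hm => ?_
  rw [hfval, hfval]
  have hmN : m < N := Finset.mem_range.mp hm
  obtain ⟨k, hk⟩ : ∃ k, N = m + k + 1 := ⟨N - m - 1, by omega⟩
  have hrefl : N - 1 - m = N - (m + 1) := by omega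
  have hE1 : E N (N + m) = tri (m + 1) := by
    unfold E; rw [if_pos (by omega : N ≤ N + m)]; congr 1; omega
  have hE2 : E N (N - (m + 1)) = tri (m + 1) := by
    unfold E; rw [if_neg (by omega : ¬ N ≤ N - (m + 1))]; congr 1; omega
  have hsgn1 : (-1 : ℝ) ^ (N + (N + m)) = (-1) ^ m := by
    rw [show N + (N + m) = 2 * N + m by ring, pow_add, pow_mul]; norm_num
  have hsgn2 : (-1 : ℝ) ^ (N + (N - (m + 1))) = -(-1) ^ m := by
    rw [show N + (N - (m + 1)) = 2 * k + (m + 1) by omega, pow_add, pow_mul]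
    norm_num [pow_succ]
  have hc1 : ((((N + m : ℕ) : ℤ) - N : ℤ) : ℝ) = m := by push_cast; ring
  have hc2 : ((((N - (m + 1) : ℕ) : ℤ) - N : ℤ) : ℝ) = -(m + 1) := by
    have : ((N - (m + 1) : ℕ) : ℤ) = (N : ℤ) - (m + 1) := by omega
    rw [this]; push_cast; ring
  rw [hrefl, hE1, hE2, hsgn1, hsgn2, hc1, hc2]
  ring

lemma jacobi_cube (hq0 : 0 < q) (hq1 : q < 1) :
    (Pinf q) ^ 3 = ∑' m : ℕ, (-1) ^ m * (2 * (m : ℝ) + 1) * q ^ tri (m + 1) := by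
  have hP := Pinf_pos hq0 hq1
  set P := Pinf q with hPdef
  -- the N-dependent summand
  set F : ℕ → ℕ → ℝ := fun N m => if m < N then
      (-1) ^ m * q ^ tri (m + 1) *
        (m * gb q (2 * N) (N + m) + (m + 1) * gb q (2 * N) (N - (m + 1)))
    else 0 with hF
  have hFval : ∀ N m, F N m = if m < N then
      (-1 : ℝ) ^ m * q ^ tri (m + 1) *
        (m * gb q (2 * N) (N + m) + (m + 1) * gb q (2 * N) (N - (m + 1)))
    else 0 := fun N m => rfl
  have hgb_bound : ∀ N m, m < N → gb q (2 * N) (N + m) ≤ (P * P)⁻¹ :=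
    fun N m h => gb_le hq0 hq1 (by omega)
  have hgb_bound2 : ∀ N m, m < N → gb q (2 * N) (N - (m + 1)) ≤ (P * P)⁻¹ :=
    fun N m h => gb_le hq0 hq1 (by omega)
  have htri_ge : ∀ m : ℕ, m ≤ tri (m + 1) := by
    intro m; rw [show tri (m + 1) = tri m + m from rfl]; omega
  have hqtri : ∀ m : ℕ, q ^ tri (m + 1) ≤ q ^ m := fun m =>
    pow_le_pow_of_le_one hq0.le hq1.le (htri_ge m)
  -- the bound
  set bound : ℕ → ℝ := fun m => (P * P)⁻¹ * ((2 * m + 2) * q ^ m) with hbound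
  have hbound_sum : Summable bound := by
    have h1 : Summable (fun m : ℕ => (m : ℝ) ^ 1 * q ^ m) :=
      summable_pow_mul_geometric_of_norm_lt_one 1 (by rw [Real.norm_eq_abs, abs_of_pos hq0]; exact hq1)
    have h2 : Summable (fun m : ℕ => q ^ m) := summable_geometric_of_lt_one hq0.le hq1
    have h3 : Summable (fun m : ℕ => (2 * (m : ℝ) + 2) * q ^ m) := by
      have := (h1.mul_left 2).add (h2.mul_left 2)
      refine this.congr fun m => ?_
      push_cast; ring
    exact h3.mul_left _
  have habs : ∀ N m, ‖F N m‖ ≤ bound m := by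
    intro N m
    rw [hFval, hbound]
    by_cases h : m < N
    · rw [if_pos h]
      have g1 : 0 ≤ gb q (2 * N) (N + m) := gb_nonneg hq0.le _ _
      have g2 : 0 ≤ gb q (2 * N) (N - (m + 1)) := gb_nonneg hq0.le _ _
      have b1 := hgb_bound N m h
      have b2 := hgb_bound2 N m h
      have hq_pos : (0:ℝ) < q ^ tri (m + 1) := pow_pos hq0 _
      rw [Real.norm_eq_abs, abs_mul, abs_mul, abs_pow, abs_neg, abs_one, one_pow, one_mul,
        abs_of_pos hq_pos]
      have hinner : |(m : ℝ) * gb q (2 * N) (N + m) + ((m : ℝ) + 1) * gb q (2 * N) (N - (m + 1))|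
          ≤ (2 * m + 2) * (P * P)⁻¹ := by
        rw [abs_of_nonneg (by positivity)]
        have e1 : (m : ℝ) * gb q (2 * N) (N + m) ≤ (m + 1) * (P * P)⁻¹ := by
          have : (m : ℝ) * gb q (2 * N) (N + m) ≤ (m : ℝ) * (P * P)⁻¹ := by
            apply mul_le_mul_of_nonneg_left b1 (by positivity)
          have hPP : (0:ℝ) < (P * P)⁻¹ := by positivity
          nlinarith
        have e2 : ((m : ℝ) + 1) * gb q (2 * N) (N - (m + 1)) ≤ ((m : ℝ) + 1) * (P * P)⁻¹ :=
          mul_le_mul_of_nonneg_left b2 (by positivity)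
        nlinarith
      calc q ^ tri (m + 1) * |(m : ℝ) * gb q (2 * N) (N + m)
              + ((m : ℝ) + 1) * gb q (2 * N) (N - (m + 1))|
          ≤ q ^ m * ((2 * m + 2) * (P * P)⁻¹) := by
            apply mul_le_mul (hqtri m) hinner (abs_nonneg _) (by positivity)
        _ = (P * P)⁻¹ * ((2 * m + 2) * q ^ m) := by ring
    · rw [if_neg h, norm_zero]
      positivity
  have hpt : ∀ m : ℕ, Filter.Tendsto (fun N => F N m) Filter.atTop
      (nhds ((-1) ^ m * (2 * (m : ℝ) + 1) * q ^ tri (m + 1) * P⁻¹)) := by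
    intro m
    have hlim : Filter.Tendsto (fun N =>
        (-1 : ℝ) ^ m * q ^ tri (m + 1) *
          (m * gb q (2 * N) (N + m) + (m + 1) * gb q (2 * N) (N - (m + 1))))
        Filter.atTop (nhds ((-1) ^ m * q ^ tri (m + 1) * (m * P⁻¹ + (m + 1) * P⁻¹))) := by
      exact (((tendsto_gb_add hq0 hq1 m).const_mul (m : ℝ)).add
        ((tendsto_gb_sub hq0 hq1 m).const_mul ((m : ℝ) + 1))).const_mul _
    have heq : (-1 : ℝ) ^ m * q ^ tri (m + 1) * (m * P⁻¹ + (m + 1) * P⁻¹)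
        = (-1) ^ m * (2 * (m : ℝ) + 1) * q ^ tri (m + 1) * P⁻¹ := by ring
    rw [heq] at hlim
    refine hlim.congr' ?_
    filter_upwards [Filter.eventually_ge_atTop (m + 1)] with N hN
    rw [hFval, if_pos (by omega)]
  have htsum_tendsto : Filter.Tendsto (fun N => ∑' m, F N m) Filter.atTop
      (nhds (∑' m : ℕ, (-1) ^ m * (2 * (m : ℝ) + 1) * q ^ tri (m + 1) * P⁻¹)) :=
    tendsto_tsum_of_dominated_convergence hbound_sum hpt (Filter.Eventually.of_forall habs)
  -- residual term
  have hres : Filter.Tendsto (fun N : ℕ => (-1 : ℝ) ^ N * N * q ^ tri (N + 1))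
      Filter.atTop (nhds 0) := by
    have hg : Filter.Tendsto (fun N : ℕ => (N : ℝ) * q ^ N) Filter.atTop (nhds 0) := by
      have h1 : Summable (fun m : ℕ => (m : ℝ) ^ 1 * q ^ m) :=
        summable_pow_mul_geometric_of_norm_lt_one 1
          (by rw [Real.norm_eq_abs, abs_of_pos hq0]; exact hq1)
      have := h1.tendsto_atTop_zero
      refine this.congr fun m => by push_cast; ring
    refine squeeze_zero_norm (fun N => ?_) hg
    rw [Real.norm_eq_abs, abs_mul, abs_mul, abs_pow, abs_neg, abs_one, one_pow, one_mul,
      Nat.abs_cast, abs_of_pos (pow_pos hq0 _)]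
    exact mul_le_mul_of_nonneg_left (hqtri N) (Nat.cast_nonneg N)
  -- LHS limit
  have hlhs : Filter.Tendsto (fun N => D q N * D q (N - 1)) Filter.atTop (nhds (P * P)) :=
    (tendsto_D hq0 hq1).mul (tendsto_D_comp hq0 hq1 (Filter.tendsto_sub_atTop_nat 1))
  -- identify
  have hid : ∀ᶠ N in Filter.atTop, D q N * D q (N - 1) = (∑' m, F N m)
      + (-1 : ℝ) ^ N * N * q ^ tri (N + 1) := by
    filter_upwards [Filter.eventually_ge_atTop 1] with N hN
    have h1 := deriv_ident hq0 N hN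
    have h2 := reorg hq0 hq1 N hN
    rw [h1, h2]
    congr 1
    have hts : ∑' m, F N m = ∑ m ∈ range N, F N m :=
      tsum_eq_sum fun m hm => by rw [hFval, if_neg (by simpa using hm)]
    rw [hts]
    refine Finset.sum_congr rfl fun m hm => ?_
    rw [hFval, if_pos (Finset.mem_range.mp hm)]
  have hfull : Filter.Tendsto (fun N => (∑' m, F N m)
      + (-1 : ℝ) ^ N * N * q ^ tri (N + 1)) Filter.atTop
      (nhds ((∑' m : ℕ, (-1) ^ m * (2 * (m : ℝ) + 1) * q ^ tri (m + 1) * P⁻¹) + 0)) :=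
    htsum_tendsto.add hres
  have hPP : P * P = (∑' m : ℕ, (-1) ^ m * (2 * (m : ℝ) + 1) * q ^ tri (m + 1) * P⁻¹) + 0 :=
    tendsto_nhds_unique (hlhs.congr' hid) hfull
  rw [add_zero, tsum_mul_right] at hPP
  have : P * P * P = (∑' m : ℕ, (-1) ^ m * (2 * (m : ℝ) + 1) * q ^ tri (m + 1)) * P⁻¹ * P := by
    rw [← hPP]
  rw [inv_mul_cancel_right₀ hP.ne'] at this
  linear_combination this

end Pinf
end Dprod
end Eta3Aux

namespace Eta3Aux

lemma chi_two_mul_add_one (m : ℕ) : chi (2 * m + 1) = (-1 : ℝ) ^ m := by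
  unfold chi
  rw [if_neg (by omega)]
  rcases Nat.even_or_odd m with h | h
  · obtain ⟨a, rfl⟩ := h
    rw [if_pos (by omega), (by exact ⟨a, rfl⟩ : Even (a + a)).neg_one_pow]
  · obtain ⟨a, rfl⟩ := h
    rw [if_neg (by omega), (by exact ⟨a, rfl⟩ : Odd (2 * a + 1)).neg_one_pow]

end Eta3Aux
end Eta3AuxSection

open Eta3Aux in
theorem eta3_series (x : ℝ) (hx : 0 < x) :
    (dedekindEtaI (4 * x / π)) ^ 3
      = ∑' n : ℕ, chi (n + 1) * ((n : ℝ) + 1) * Real.exp (-(((n : ℝ) + 1) ^ 2) * x) := by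
  have hq0 : (0:ℝ) < Real.exp (-(8 * x)) := Real.exp_pos _
  have hq1 : Real.exp (-(8 * x)) < 1 := by
    have h := Real.exp_lt_exp.mpr (show -(8 * x) < 0 by linarith)
    simpa using h
  set q : ℝ := Real.exp (-(8 * x)) with hq
  have hπ : (π : ℝ) ≠ 0 := Real.pi_ne_zero
  -- eta = exp(-x/3) * Pinf q
  have hEta : dedekindEtaI (4 * x / π) = Real.exp (-(x / 3)) * Pinf q := by
    unfold dedekindEtaI Pinf
    congr 1
    · congr 1
      field_simp
      ring
    · refine tprod_congr fun n => ?_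
      congr 1
      rw [hq, ← Real.exp_nat_mul]
      congr 1
      have h48 : 2 * π * (4 * x / π) = 8 * x := by field_simp; ring
      rw [h48]
      push_cast
      ring
  -- per-term identity
  have key : ∀ m : ℕ, Real.exp (-x) * ((-1) ^ m * (2 * (m : ℝ) + 1) * q ^ tri (m + 1))
      = (-1) ^ m * (2 * (m : ℝ) + 1) * Real.exp (-((2 * (m : ℝ) + 1) ^ 2) * x) := by
    intro m
    have h2 : 2 * ((tri (m + 1) : ℕ) : ℝ) + ((m : ℝ) + 1)
        = ((m : ℝ) + 1) * ((m : ℝ) + 1) := by exact_mod_cast two_tri (m + 1)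
    have hT : q ^ tri (m + 1) = Real.exp (((tri (m + 1) : ℕ) : ℝ) * -(8 * x)) := by
      rw [hq, ← Real.exp_nat_mul]
    have hargs : -x + ((tri (m + 1) : ℕ) : ℝ) * -(8 * x) = -((2 * (m : ℝ) + 1) ^ 2) * x := by
      linear_combination (-4 * x) * h2
    calc Real.exp (-x) * ((-1) ^ m * (2 * (m : ℝ) + 1) * q ^ tri (m + 1))
        = (-1) ^ m * (2 * (m : ℝ) + 1)
            * (Real.exp (-x) * Real.exp (((tri (m + 1) : ℕ) : ℝ) * -(8 * x))) := by
          rw [hT]; ring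
      _ = (-1) ^ m * (2 * (m : ℝ) + 1)
            * Real.exp (-x + ((tri (m + 1) : ℕ) : ℝ) * -(8 * x)) := by
          rw [← Real.exp_add]
      _ = (-1) ^ m * (2 * (m : ℝ) + 1) * Real.exp (-((2 * (m : ℝ) + 1) ^ 2) * x) := by
          rw [hargs]
  -- the cube
  have hcube : (dedekindEtaI (4 * x / π)) ^ 3
      = ∑' m : ℕ, Real.exp (-x) * ((-1) ^ m * (2 * (m : ℝ) + 1) * q ^ tri (m + 1)) := by
    rw [hEta, mul_pow, jacobi_cube hq0 hq1]
    have h3 : Real.exp (-(x / 3)) ^ 3 = Real.exp (-x) := by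
      rw [← Real.exp_nat_mul]; congr 1; push_cast; ring
    rw [h3, ← tsum_mul_left]
  -- even-odd split of the RHS
  set f : ℕ → ℝ := fun n => chi (n + 1) * ((n : ℝ) + 1)
      * Real.exp (-(((n : ℝ) + 1) ^ 2) * x) with hf
  have hfval : ∀ n, f n = chi (n + 1) * ((n : ℝ) + 1)
      * Real.exp (-(((n : ℝ) + 1) ^ 2) * x) := fun _ => rfl
  have hodd : ∀ k, f (2 * k + 1) = 0 := by
    intro k
    rw [hfval]
    have hc : chi (2 * k + 1 + 1) = 0 := by unfold chi; rw [if_pos (by omega)]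
    rw [hc]; ring
  set g : ℕ → ℝ := fun m => (-1) ^ m * (2 * (m : ℝ) + 1)
      * Real.exp (-((2 * (m : ℝ) + 1) ^ 2) * x) with hg
  have hgval : ∀ m, g m = (-1) ^ m * (2 * (m : ℝ) + 1)
      * Real.exp (-((2 * (m : ℝ) + 1) ^ 2) * x) := fun _ => rfl
  have heven : ∀ m, f (2 * m) = g m := by
    intro m
    rw [hfval, hgval, chi_two_mul_add_one m]
    push_cast
    ring_nf
  -- summability of g
  have hr0 : (0:ℝ) < Real.exp (-(2 * x)) := Real.exp_pos _
  have hr1 : Real.exp (-(2 * x)) < 1 := by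
    have h := Real.exp_lt_exp.mpr (show -(2 * x) < 0 by linarith)
    simpa using h
  have hgsum : Summable g := by
    have hmaj : Summable (fun m : ℕ => (2 * (m : ℝ) + 1) * Real.exp (-x)
        * Real.exp (-(2 * x)) ^ m) := by
      have h1 : Summable (fun m : ℕ => (m : ℝ) ^ 1 * Real.exp (-(2 * x)) ^ m) :=
        summable_pow_mul_geometric_of_norm_lt_one 1
          (by rw [Real.norm_eq_abs, abs_of_pos hr0]; exact hr1)
      have h2 : Summable (fun m : ℕ => Real.exp (-(2 * x)) ^ m) :=
        summable_geometric_of_lt_one hr0.le hr1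
      have := (h1.mul_left (2 * Real.exp (-x))).add (h2.mul_left (Real.exp (-x)))
      refine this.congr fun m => ?_
      push_cast
      ring
    refine Summable.of_norm_bounded hmaj fun m => ?_
    rw [hgval, Real.norm_eq_abs, abs_mul, abs_mul, abs_pow, abs_neg, abs_one, one_pow,
      one_mul, abs_of_pos (Real.exp_pos _), abs_of_pos (show (0:ℝ) < 2 * m + 1 by positivity)]
    have hexp : Real.exp (-((2 * (m : ℝ) + 1) ^ 2) * x)
        ≤ Real.exp (-x) * Real.exp (-(2 * x)) ^ m := by
      rw [← Real.exp_nat_mul, ← Real.exp_add]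
      apply Real.exp_le_exp.mpr
      nlinarith [mul_nonneg (show (0:ℝ) ≤ 4 * (m:ℝ) ^ 2 + 2 * m by positivity) hx.le]
    calc (2 * (m : ℝ) + 1) * Real.exp (-((2 * (m : ℝ) + 1) ^ 2) * x)
        ≤ (2 * (m : ℝ) + 1) * (Real.exp (-x) * Real.exp (-(2 * x)) ^ m) := by
          exact mul_le_mul_of_nonneg_left hexp (by positivity)
      _ = (2 * (m : ℝ) + 1) * Real.exp (-x) * Real.exp (-(2 * x)) ^ m := by ring
  have hfe : Summable (fun k => f (2 * k)) := hgsum.congr fun m => (heven m).symm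
  have hfo : Summable (fun k => f (2 * k + 1)) :=
    summable_zero.congr fun k => (hodd k).symm
  calc (dedekindEtaI (4 * x / π)) ^ 3
      = ∑' m : ℕ, Real.exp (-x) * ((-1) ^ m * (2 * (m : ℝ) + 1) * q ^ tri (m + 1)) := hcube
    _ = ∑' m : ℕ, g m := tsum_congr fun m => by rw [key m, hgval]
    _ = ∑' k : ℕ, f (2 * k) := (tsum_congr heven).symm
    _ = (∑' k : ℕ, f (2 * k)) + ∑' k : ℕ, f (2 * k + 1) := by
        rw [tsum_congr hodd, tsum_zero, add_zero]
    _ = ∑' n : ℕ, f n := tsum_even_add_odd hfe hfo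
end
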